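/- arXiv:1406.0762 — 5 statements merged into one kernel-verified Lean document; each statement's English description precedes it below -/
import Mathlib

section
/- Let ⟨f,g⟩_∇ = c∬_Ω ∇f·∇g W dxdy be the gradient bilinear form on bivariate polynomials for a product weight W, and let ⟨f,g⟩_S = ⟨f,g⟩_∇ + λ f(c₁,c₂)g(c₁,c₂) with λ > 0. If {S_k^n : 0 ≤ k ≤ n} is a monic orthogonal basis of degree-n polynomials for ⟨·,·⟩_∇ (orthogonal to all polynomials of degree < n), then the polynomials 𝖲_k^n(x,y) := S_k^n(x,y) - S_k^n(c₁,c₂) for n ≥ 1, together with 𝖲_0^0 = 1, form a monic orthogonal basis with respect to ⟨·,·⟩_S. -/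
open MvPolynomial

/-- If `{S_k^n}` is a monic orthogonal basis for the gradient bilinear form `B = ⟨·,·⟩_∇`
(each `S_k^n` being orthogonal to all polynomials of total degree `< n`), then the
polynomials `𝖲_k^n = S_k^n - S_k^n(c₁,c₂)` (for `n ≥ 1`) are orthogonal of degree `n` for
the Sobolev inner product `⟨f,g⟩_S = ⟨f,g⟩_∇ + λ f(c₁,c₂)g(c₁,c₂)`; together with
`𝖲_0^0 = 1` they form a monic orthogonal basis for `⟨·,·⟩_S`. -/
theorem sobolev_basis_from_gradient_basis
    (B : MvPolynomial (Fin 2) ℝ → MvPolynomial (Fin 2) ℝ → ℝ)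
    (hsymm : ∀ f g, B f g = B g f)
    (haddl : ∀ f g h, B (f + g) h = B f h + B g h)
    (hsmull : ∀ (r : ℝ) f g, B (r • f) g = r * B f g)
    (hconst : ∀ (r : ℝ) (g : MvPolynomial (Fin 2) ℝ), B (C r) g = 0)
    (lam : ℝ) (hlam : 0 < lam) (c₁ c₂ : ℝ)
    (ev : MvPolynomial (Fin 2) ℝ → ℝ)
    (hev : ev = MvPolynomial.eval (fun i : Fin 2 => if i = 0 then c₁ else c₂))
    (S : ℕ → ℕ → MvPolynomial (Fin 2) ℝ)
    (hmonic : ∀ n, 1 ≤ n → ∀ k, k ≤ n →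
      (S n k - X 0 ^ (n - k) * X 1 ^ k).totalDegree < n)
    (horth : ∀ n, 1 ≤ n → ∀ k, k ≤ n →
      ∀ Q : MvPolynomial (Fin 2) ℝ, Q.totalDegree < n → B (S n k) Q = 0) :
    -- the shifted polynomials `𝖲_k^n = S_k^n - S_k^n(c₁,c₂)` are monic and
    -- orthogonal of degree `n` for the Sobolev inner product:
    (∀ n, 1 ≤ n → ∀ k, k ≤ n →
      ((S n k - C (ev (S n k))) - X 0 ^ (n - k) * X 1 ^ k).totalDegree < n) ∧
    (∀ n, 1 ≤ n → ∀ k, k ≤ n → ∀ Q : MvPolynomial (Fin 2) ℝ, Q.totalDegree < n →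
      B (S n k - C (ev (S n k))) Q
        + lam * ev (S n k - C (ev (S n k))) * ev Q = 0) ∧
    -- and `𝖲_0^0 = 1` is orthogonal to every `𝖲_k^n`, `n ≥ 1`:
    (∀ n, 1 ≤ n → ∀ k, k ≤ n →
      B ((1 : MvPolynomial (Fin 2) ℝ)) (S n k - C (ev (S n k)))
        + lam * ev (1 : MvPolynomial (Fin 2) ℝ) * ev (S n k - C (ev (S n k))) = 0) := by
  have hBsub : ∀ f g h : MvPolynomial (Fin 2) ℝ, B (f - g) h = B f h - B g h := by
    intro f g h
    have : f - g = f + (-1 : ℝ) • g := by ring_nf; module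
    rw [this, haddl, hsmull]; ring
  have hevsub : ∀ n k, ev (S n k - C (ev (S n k))) = 0 := by
    intro n k
    subst hev
    simp
  refine ⟨?_, ?_, ?_⟩
  · intro n hn k hk
    have h1 := hmonic n hn k hk
    have : (S n k - C (ev (S n k))) - X 0 ^ (n - k) * X 1 ^ k
        = (S n k - X 0 ^ (n - k) * X 1 ^ k) + (- C (ev (S n k))) := by ring
    rw [this]
    calc ((S n k - X 0 ^ (n - k) * X 1 ^ k) + (- C (ev (S n k)))).totalDegree
        ≤ max (S n k - X 0 ^ (n - k) * X 1 ^ k).totalDegree (- C (ev (S n k))).totalDegree :=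
          totalDegree_add _ _
      _ < n := by
          rw [totalDegree_neg]
          exact max_lt h1 (lt_of_le_of_lt (totalDegree_C _).le hn)
  · intro n hn k hk Q hQ
    rw [hBsub, hconst, horth n hn k hk Q hQ, hevsub]
    ring
  · intro n hn k hk
    have : (1 : MvPolynomial (Fin 2) ℝ) = C (1 : ℝ) := by simp
    rw [this, hconst, hevsub]
    ring
end

section
/- For the product Laguerre weight W_{α,β}(x,y) = x^α e^{-x} y^β e^{-y} on [0,∞)², the polynomial Q_0^n(x,y) := q_n(w_α;x) (with q_n(w_α;x) = p_n(w_α;x) + n p_{n-1}(w_α;x)) satisfies ⟨Q_0^n, P⟩_∇ = 0 for every polynomial P of total degree at most n-1, where ⟨f,g⟩_∇ = c_{α,β} ∬ ∇f·∇g W_{α,β} dx dy. -/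
open Finset MeasureTheory

/-- The classical Laguerre polynomial. -/
noncomputable def laguerre (α : ℝ) (n : ℕ) (x : ℝ) : ℝ :=
  ∑ k ∈ Finset.range (n + 1),
    (-1) ^ k * (Real.Gamma ((n : ℝ) + α + 1) /
      (Real.Gamma ((k : ℝ) + α + 1) * (n - k).factorial)) * x ^ k / k.factorial

/-- The monic Laguerre polynomial `p_n(w_α;x) = (-1)^n n! L_n^α(x)`. -/
noncomputable def lagMonic (α : ℝ) (n : ℕ) (x : ℝ) : ℝ :=
  (-1) ^ n * n.factorial * laguerre α n x

/-- `q_n(w_α;x) = p_n(w_α;x) + n·p_{n-1}(w_α;x)`. -/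
noncomputable def lagQ (α : ℝ) (n : ℕ) (x : ℝ) : ℝ :=
  lagMonic α n x + n * lagMonic α (n - 1) x

/-- The normalized gradient bilinear form for the product Laguerre weight
`W_{α,β}(x,y) = x^α e^{-x} y^β e^{-y}` on `[0,∞)²`. -/
noncomputable def lagGrad (α β : ℝ) (f g : ℝ → ℝ → ℝ) : ℝ :=
  (1 / (Real.Gamma (α + 1) * Real.Gamma (β + 1))) *
    ∫ p in (Set.Ioi (0 : ℝ)) ×ˢ (Set.Ioi (0 : ℝ)),
      (deriv (fun t => f t p.2) p.1 * deriv (fun t => g t p.2) p.1 +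
        deriv (fun t => f p.1 t) p.2 * deriv (fun t => g p.1 t) p.2) *
      (Real.rpow p.1 α * Real.exp (-p.1) * (Real.rpow p.2 β * Real.exp (-p.2)))

/-- Evaluation of a bivariate polynomial as a function of two real variables. -/
noncomputable def pev (P : MvPolynomial (Fin 2) ℝ) (x y : ℝ) : ℝ :=
  MvPolynomial.eval ![x, y] P

/-- The product monic Laguerre polynomials `P_k^n(x,y) = p_{n-k}(w_α;x) p_k(w_β;y)`. -/
noncomputable def lagP (α β : ℝ) (n k : ℕ) (x y : ℝ) : ℝ :=
  lagMonic α (n - k) x * lagMonic β k y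

/-- The polynomials `Q_k^n(x,y) = q_{n-k}(w_α;x) q_k(w_β;y)`. -/
noncomputable def lagQ2 (α β : ℝ) (n k : ℕ) (x y : ℝ) : ℝ :=
  lagQ α (n - k) x * lagQ β k y

/-- `h_k^m = (m-k)!·k!·(α+1)_{m-k}·(β+1)_k`. -/
noncomputable def hkn (α β : ℝ) (k m : ℕ) : ℝ :=
  ((m - k).factorial : ℝ) * k.factorial *
    (ascPochhammer ℝ (m - k)).eval (α + 1) * (ascPochhammer ℝ k).eval (β + 1)

section LagAux
open Polynomial in
private noncomputable def altsum (m : ℕ) (f : ℕ → ℝ) : ℝ :=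
  ∑ k ∈ Finset.range (m + 1), (-1) ^ k * (m.choose k) * f k

open Polynomial in
private lemma altsum_succ (m : ℕ) (f : ℕ → ℝ) :
    altsum (m + 1) f = altsum m f - altsum m (fun k => f (k + 1)) := by
  have h1 : altsum (m+1) f
      = (∑ k ∈ Finset.range (m+1), (-1)^(k+1) * ((m+1).choose (k+1)) * f (k+1)) + f 0 := by
    rw [altsum, Finset.sum_range_succ']
    simp
  have h3 : altsum m f = (∑ k ∈ Finset.range (m+1), (-1)^(k+1) * (m.choose (k+1)) * f (k+1)) + f 0 := by
    have : altsum m f = ∑ k ∈ Finset.range (m+2), (-1)^k * (m.choose k) * f k := by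
      rw [altsum, Finset.sum_range_succ (n := m+1)]
      simp [Nat.choose_eq_zero_of_lt (by omega : m < m + 1)]
    rw [this, Finset.sum_range_succ']
    simp
  have h4 : ∑ k ∈ Finset.range (m+1), (-1)^(k+1) * (((m+1).choose (k+1)) : ℝ) * f (k+1)
      = ∑ k ∈ Finset.range (m+1), ((-1)^(k+1) * (m.choose (k+1)) * f (k+1)
        - (-1)^k * (m.choose k) * f (k+1)) := by
    apply Finset.sum_congr rfl
    intro k _
    rw [Nat.choose_succ_succ]
    push_cast
    ring
  rw [h1, h3, h4, Finset.sum_sub_distrib, altsum]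
  ring

open Polynomial in
private lemma altsum_poly_eval (m : ℕ) (p : Polynomial ℝ) (hp : p.natDegree < m) :
    altsum m (fun k => p.eval (k : ℝ)) = 0 := by
  induction m generalizing p with
  | zero => omega
  | succ m ih =>
    rcases Nat.eq_zero_or_pos m with hm | hm
    · subst hm
      obtain ⟨c, rfl⟩ := Polynomial.natDegree_eq_zero.mp (show p.natDegree = 0 by omega)
      simp [altsum, Finset.sum_range_succ]
    · rw [altsum_succ]
      have key : altsum m (fun k => p.eval (k:ℝ)) - altsum m (fun k => p.eval ((k:ℝ)+1))
          = altsum m (fun k => (p - p.comp (X + C 1)).eval (k:ℝ)) := by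
        simp only [altsum, ← Finset.sum_sub_distrib]
        apply Finset.sum_congr rfl
        intro k _
        simp [Polynomial.eval_comp]
        ring
      have hdeg : (p - p.comp (X + C 1)).natDegree < m := by
        rcases eq_or_ne (p - p.comp (X + C 1)) 0 with h0 | h0
        · rw [h0]; simpa using hm
        · rcases Nat.eq_zero_or_pos p.natDegree with hp0 | hp0
          · obtain ⟨c, rfl⟩ := Polynomial.natDegree_eq_zero.mp hp0
            simp at h0
          · have hpne : p ≠ 0 := fun h => by rw [h] at hp0; simp at hp0
            have hX1 : ((X + C 1 : Polynomial ℝ)).natDegree = 1 := Polynomial.natDegree_X_add_C 1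
            have hdc : (p.comp (X + C 1)).natDegree = p.natDegree := by
              rw [Polynomial.natDegree_comp, hX1, mul_one]
            have hcne : p.comp (X + C 1) ≠ 0 := by
              intro h
              have := hdc
              rw [h] at this
              simp at this
              omega
            have hlc : p.leadingCoeff = (p.comp (X + C 1)).leadingCoeff := by
              rw [Polynomial.leadingCoeff_comp (by rw [hX1]; omega)]
              have : ((X + C 1 : Polynomial ℝ)).leadingCoeff = 1 := (Polynomial.monic_X_add_C 1)
              rw [this, one_pow, mul_one]
            have hdd : p.degree = (p.comp (X + C 1)).degree := by
              rw [Polynomial.degree_eq_natDegree hpne, Polynomial.degree_eq_natDegree hcne, hdc]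
            have hlt := Polynomial.degree_sub_lt hdd hpne hlc
            have : (p - p.comp (X + C 1)).natDegree < p.natDegree :=
              Polynomial.natDegree_lt_natDegree h0 hlt
            omega
      have e1 : altsum m (fun k => p.eval (((k:ℕ)+1:ℕ):ℝ)) = altsum m (fun k => p.eval ((k:ℝ)+1)) := by
        unfold altsum
        apply Finset.sum_congr rfl
        intro k _
        push_cast
        ring_nf
      rw [e1, key, ih _ hdeg]

private lemma Gamma_add_nat' (x : ℝ) (hx : 0 < x) (j : ℕ) :
    Real.Gamma (x + j) = (ascPochhammer ℝ j).eval x * Real.Gamma x := by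
  induction j with
  | zero => simp
  | succ j ih =>
    have : x + (j + 1 : ℕ) = (x + j) + 1 := by push_cast; ring
    rw [this, Real.Gamma_add_one (by positivity), ih, ascPochhammer_succ_right]
    simp [Polynomial.eval_mul]
    ring

private lemma weight_integrableOn (α : ℝ) (hα : -1 < α) (j : ℕ) :
    IntegrableOn (fun x : ℝ => x ^ j * (Real.rpow x α * Real.exp (-x))) (Set.Ioi 0) := by
  have hpos : (0:ℝ) < (j : ℝ) + α + 1 := by
    have : (0:ℝ) ≤ j := Nat.cast_nonneg j
    linarith
  have h := Real.GammaIntegral_convergent hpos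
  apply h.congr_fun ?_ measurableSet_Ioi
  intro x hx
  have hx0 : (0:ℝ) < x := hx
  show Real.exp (-x) * x ^ ((j:ℝ) + α + 1 - 1) = x ^ j * ((x : ℝ) ^ α * Real.exp (-x))
  rw [show (j:ℝ) + α + 1 - 1 = (j:ℝ) + α by ring, Real.rpow_add hx0, Real.rpow_natCast]
  ring

private lemma weight_moment (α : ℝ) (hα : -1 < α) (j : ℕ) :
    ∫ x in Set.Ioi (0:ℝ), x ^ j * (Real.rpow x α * Real.exp (-x))
      = Real.Gamma ((j : ℝ) + α + 1) := by
  have hpos : (0:ℝ) < (j : ℝ) + α + 1 := by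
    have : (0:ℝ) ≤ j := Nat.cast_nonneg j
    linarith
  rw [Real.Gamma_eq_integral hpos]
  apply setIntegral_congr_fun measurableSet_Ioi
  intro x hx
  have hx0 : (0:ℝ) < x := hx
  show x ^ j * ((x:ℝ) ^ α * Real.exp (-x)) = Real.exp (-x) * x ^ ((j:ℝ) + α + 1 - 1)
  rw [show (j:ℝ) + α + 1 - 1 = (j:ℝ) + α by ring, Real.rpow_add hx0, Real.rpow_natCast]
  ring

private lemma lagMonic_weight_integrableOn (α : ℝ) (hα : -1 < α) (m j : ℕ) :
    IntegrableOn (fun x : ℝ => lagMonic α m x * x ^ j * (Real.rpow x α * Real.exp (-x)))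
      (Set.Ioi 0) := by
  have hint : ∀ k : ℕ, IntegrableOn
      (fun x : ℝ => ((-1:ℝ)^m * m.factorial * ((-1) ^ k * (Real.Gamma ((m : ℝ) + α + 1) /
        (Real.Gamma ((k : ℝ) + α + 1) * (m - k).factorial)) / k.factorial)) *
        (x ^ (k + j) * (Real.rpow x α * Real.exp (-x)))) (Set.Ioi 0) := fun k =>
    (weight_integrableOn α hα (k + j)).const_mul _
  have h := MeasureTheory.integrable_finset_sum (μ := volume.restrict (Set.Ioi 0))
    (Finset.range (m+1)) (fun k _ => hint k)
  have hsum : ∀ x : ℝ, lagMonic α m x * x ^ j * (Real.rpow x α * Real.exp (-x))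
      = ∑ k ∈ Finset.range (m+1), ((-1:ℝ)^m * m.factorial * ((-1) ^ k * (Real.Gamma ((m : ℝ) + α + 1) /
        (Real.Gamma ((k : ℝ) + α + 1) * (m - k).factorial)) / k.factorial)) *
        (x ^ (k + j) * (Real.rpow x α * Real.exp (-x))) := by
    intro x
    rw [lagMonic, laguerre, Finset.mul_sum, Finset.sum_mul, Finset.sum_mul]
    apply Finset.sum_congr rfl
    intro k _
    rw [pow_add]
    ring
  exact h.congr (Filter.Eventually.of_forall fun x => (hsum x).symm)

private lemma lagMonic_orthogonal (α : ℝ) (hα : -1 < α) (m j : ℕ) (hj : j < m) :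
    ∫ x in Set.Ioi (0:ℝ), lagMonic α m x * x ^ j * (Real.rpow x α * Real.exp (-x)) = 0 := by
  have hint : ∀ k : ℕ, IntegrableOn
      (fun x : ℝ => ((-1:ℝ)^m * m.factorial * ((-1) ^ k * (Real.Gamma ((m : ℝ) + α + 1) /
        (Real.Gamma ((k : ℝ) + α + 1) * (m - k).factorial)) / k.factorial)) *
        (x ^ (k + j) * (Real.rpow x α * Real.exp (-x)))) (Set.Ioi 0) := fun k =>
    (weight_integrableOn α hα (k + j)).const_mul _
  have hsum : ∀ x : ℝ, lagMonic α m x * x ^ j * (Real.rpow x α * Real.exp (-x))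
      = ∑ k ∈ Finset.range (m+1), ((-1:ℝ)^m * m.factorial * ((-1) ^ k * (Real.Gamma ((m : ℝ) + α + 1) /
        (Real.Gamma ((k : ℝ) + α + 1) * (m - k).factorial)) / k.factorial)) *
        (x ^ (k + j) * (Real.rpow x α * Real.exp (-x))) := by
    intro x
    rw [lagMonic, laguerre, Finset.mul_sum, Finset.sum_mul, Finset.sum_mul]
    apply Finset.sum_congr rfl
    intro k _
    rw [pow_add]
    ring
  calc ∫ x in Set.Ioi (0:ℝ), lagMonic α m x * x ^ j * (Real.rpow x α * Real.exp (-x))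
      = ∑ k ∈ Finset.range (m+1), ∫ x in Set.Ioi (0:ℝ),
          ((-1:ℝ)^m * m.factorial * ((-1) ^ k * (Real.Gamma ((m : ℝ) + α + 1) /
          (Real.Gamma ((k : ℝ) + α + 1) * (m - k).factorial)) / k.factorial)) *
          (x ^ (k + j) * (Real.rpow x α * Real.exp (-x))) := by
        rw [← MeasureTheory.integral_finset_sum _ (fun k _ => hint k)]
        exact setIntegral_congr_fun measurableSet_Ioi (fun x _ => hsum x)
    _ = ∑ k ∈ Finset.range (m+1), ((-1:ℝ)^m * m.factorial * ((-1) ^ k * (Real.Gamma ((m : ℝ) + α + 1) /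
          (Real.Gamma ((k : ℝ) + α + 1) * (m - k).factorial)) / k.factorial)) *
          Real.Gamma (((k + j : ℕ) : ℝ) + α + 1) := by
        apply Finset.sum_congr rfl
        intro k _
        rw [MeasureTheory.integral_const_mul, weight_moment α hα (k + j)]
    _ = ((-1:ℝ)^m * Real.Gamma ((m:ℝ) + α + 1)) * altsum m (fun k =>
          ((ascPochhammer ℝ j).comp (Polynomial.X + Polynomial.C (α + 1))).eval (k:ℝ)) := by
        rw [altsum, Finset.mul_sum]
        apply Finset.sum_congr rfl
        intro k hk
        have hkm : k ≤ m := by simp at hk; omega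
        have hG : Real.Gamma (((k + j : ℕ) : ℝ) + α + 1)
            = (ascPochhammer ℝ j).eval ((k:ℝ) + α + 1) * Real.Gamma ((k:ℝ) + α + 1) := by
          rw [show (((k + j : ℕ) : ℝ) + α + 1) = ((k:ℝ) + α + 1) + (j:ℕ) by push_cast; ring]
          exact Gamma_add_nat' _ (by have : (0:ℝ) ≤ k := Nat.cast_nonneg k; linarith) j
        have hGpos : 0 < Real.Gamma ((k:ℝ) + α + 1) :=
          Real.Gamma_pos_of_pos (by have : (0:ℝ) ≤ k := Nat.cast_nonneg k; linarith)
        have hchoose : (m.factorial : ℝ) / ((k.factorial : ℝ) * ((m-k).factorial : ℝ))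
            = (m.choose k : ℝ) := by
          have hc := Nat.choose_mul_factorial_mul_factorial hkm
          rw [div_eq_iff (by positivity), ← hc]
          push_cast
          ring
        rw [hG, Polynomial.eval_comp]
        simp only [Polynomial.eval_add, Polynomial.eval_X, Polynomial.eval_C]
        rw [show (k:ℝ) + (α + 1) = (k:ℝ) + α + 1 by ring]
        field_simp
        rw [← hchoose]
        field_simp
    _ = 0 := by
        rw [altsum_poly_eval m _ (by
          rw [Polynomial.natDegree_comp, ascPochhammer_natDegree, Polynomial.natDegree_X_add_C,
            mul_one]
          exact hj), mul_zero]

private noncomputable def lagC (α : ℝ) (n k : ℕ) : ℝ :=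
  (-1) ^ k * (Real.Gamma ((n : ℝ) + α + 1) /
      (Real.Gamma ((k : ℝ) + α + 1) * (n - k).factorial)) / k.factorial

private lemma laguerre_eq (α : ℝ) (n : ℕ) (x : ℝ) :
    laguerre α n x = ∑ k ∈ Finset.range (n + 1), lagC α n k * x ^ k := by
  unfold laguerre lagC
  apply Finset.sum_congr rfl
  intro k _
  ring

private lemma gammaPos (α : ℝ) (hα : -1 < α) (k : ℕ) : 0 < Real.Gamma ((k:ℝ) + α + 1) :=
  Real.Gamma_pos_of_pos (by have : (0:ℝ) ≤ k := Nat.cast_nonneg k; linarith)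

private lemma lagC_identity (α : ℝ) (hα : -1 < α) (m k : ℕ) (hk : k + 1 ≤ m) :
    lagC α (m+1) (k+1) * (k+1) - lagC α m (k+1) * (k+1) + lagC α m k = 0 := by
  obtain ⟨d, hd⟩ : ∃ d, m - k = d + 1 := ⟨m - k - 1, by omega⟩
  have h1 : m + 1 - (k + 1) = d + 1 := by omega
  have h2 : m - (k + 1) = d := by omega
  unfold lagC
  rw [h1, h2, hd]
  have hGk : 0 < Real.Gamma ((k:ℝ) + α + 1) := gammaPos α hα k
  have hGm : 0 < Real.Gamma ((m:ℝ) + α + 1) := gammaPos α hα m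
  have ek : Real.Gamma (((k+1:ℕ):ℝ) + α + 1) = ((k:ℝ) + α + 1) * Real.Gamma ((k:ℝ) + α + 1) := by
    rw [show (((k+1:ℕ):ℝ) + α + 1) = ((k:ℝ) + α + 1) + 1 by push_cast; ring]
    rw [Real.Gamma_add_one (ne_of_gt (by have : (0:ℝ) ≤ k := Nat.cast_nonneg k; linarith))]
  have em : Real.Gamma (((m+1:ℕ):ℝ) + α + 1) = ((m:ℝ) + α + 1) * Real.Gamma ((m:ℝ) + α + 1) := by
    rw [show (((m+1:ℕ):ℝ) + α + 1) = ((m:ℝ) + α + 1) + 1 by push_cast; ring]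
    rw [Real.Gamma_add_one (ne_of_gt (by have : (0:ℝ) ≤ m := Nat.cast_nonneg m; linarith))]
  rw [ek, em, Nat.factorial_succ (d), Nat.factorial_succ (k)]
  have hkpos : (0:ℝ) < (k:ℝ) + α + 1 := by have : (0:ℝ) ≤ k := Nat.cast_nonneg k; linarith
  have hdf : ((d.factorial : ℝ)) ≠ 0 := by positivity
  have hkf : ((k.factorial : ℝ)) ≠ 0 := by positivity
  have hmd : (m : ℝ) = (k:ℝ) + (d:ℝ) + 1 := by
    have : m = k + d + 1 := by omega
    rw [this]; push_cast; ring
  push_cast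
  field_simp
  rw [hmd]
  ring

private lemma lagC_top (α : ℝ) (hα : -1 < α) (m : ℕ) :
    lagC α (m+1) (m+1) * (m+1) + lagC α m m = 0 := by
  unfold lagC
  rw [Nat.sub_self, Nat.sub_self, Nat.factorial_succ m]
  have hGm : 0 < Real.Gamma (((m+1:ℕ):ℝ) + α + 1) := gammaPos α hα (m+1)
  have hGm' : 0 < Real.Gamma (((m:ℕ):ℝ) + α + 1) := gammaPos α hα m
  have hkf : ((m.factorial : ℝ)) ≠ 0 := by positivity
  simp only [Nat.factorial_zero, Nat.cast_one, mul_one]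
  rw [div_self (ne_of_gt hGm), div_self (ne_of_gt hGm')]
  push_cast
  field_simp
  ring

private lemma laguerre_hasDerivAt (α : ℝ) (n : ℕ) (x : ℝ) :
    HasDerivAt (fun y => laguerre α n y)
      (∑ k ∈ Finset.range (n + 1), lagC α n k * (k * x ^ (k - 1))) x := by
  have : ∀ y, laguerre α n y = ∑ k ∈ Finset.range (n + 1), lagC α n k * y ^ k :=
    laguerre_eq α n
  simp only [funext this]
  apply HasDerivAt.fun_sum
  intro k _
  exact (hasDerivAt_pow k x).const_mul _

open Polynomial in
private lemma lagQ_hasDerivAt (α : ℝ) (hα : -1 < α) (m : ℕ) (x : ℝ) :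
    HasDerivAt (fun y => lagQ α (m+1) y) (((m+1 : ℕ) : ℝ) * lagMonic α m x) x := by
  have hfun : ∀ y, lagQ α (m+1) y
      = ((-1:ℝ)^(m+1) * (m+1).factorial) * (laguerre α (m+1) y - laguerre α m y) := by
    intro y
    unfold lagQ lagMonic
    rw [Nat.add_sub_cancel, Nat.factorial_succ]
    push_cast
    ring
  simp only [funext hfun]
  have hD := ((laguerre_hasDerivAt α (m+1) x).fun_sub (laguerre_hasDerivAt α m x)).const_mul
    ((-1:ℝ)^(m+1) * ((m+1).factorial : ℝ))
  refine hD.congr_deriv ?_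
  have hD1 : ∑ k ∈ Finset.range (m + 2), lagC α (m+1) k * (k * x ^ (k - 1))
      = ∑ k ∈ Finset.range (m + 1), lagC α (m+1) (k+1) * ((k+1) * x ^ k) := by
    rw [Finset.sum_range_succ']
    simp
  have hD2 : ∑ k ∈ Finset.range (m + 1), lagC α m k * (k * x ^ (k - 1))
      = ∑ k ∈ Finset.range m, lagC α m (k+1) * ((k+1) * x ^ k) := by
    rw [Finset.sum_range_succ']
    simp
  rw [hD1, hD2]
  have hlm : lagMonic α m x = (-1:ℝ)^m * m.factorial * ∑ k ∈ Finset.range (m+1), lagC α m k * x ^ k := by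
    unfold lagMonic
    rw [laguerre_eq]
  rw [hlm]
  have hsub : ∀ k ∈ Finset.range m,
      lagC α (m+1) (k+1) * ((k+1) * x ^ k) - lagC α m (k+1) * ((k+1) * x ^ k)
      = -(lagC α m k * x ^ k) := by
    intro k hk
    have hkm : k + 1 ≤ m := by simp at hk; omega
    have := lagC_identity α hα m k hkm
    have hx : (lagC α (m+1) (k+1) * (k+1) - lagC α m (k+1) * (k+1) + lagC α m k) * x ^ k = 0 := by
      rw [this, zero_mul]
    nlinarith [hx]
  have htop : lagC α (m+1) (m+1) * ((m+1) * x ^ m) = -(lagC α m m * x ^ m) := by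
    have := lagC_top α hα m
    have hx : (lagC α (m+1) (m+1) * (m+1) + lagC α m m) * x ^ m = 0 := by
      rw [this, zero_mul]
    nlinarith [hx]
  have hmain : (∑ k ∈ Finset.range (m+1), lagC α (m+1) (k+1) * ((k+1) * x ^ k))
      - ∑ k ∈ Finset.range m, lagC α m (k+1) * ((k+1) * x ^ k)
      = -∑ k ∈ Finset.range (m+1), lagC α m k * x ^ k := by
    rw [Finset.sum_range_succ (fun k => lagC α (m+1) (k+1) * ((k+1) * x ^ k)) m,
      Finset.sum_range_succ (fun k => lagC α m k * x ^ k) m]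
    rw [add_sub_right_comm, ← Finset.sum_sub_distrib, Finset.sum_congr rfl hsub, htop]
    rw [Finset.sum_neg_distrib]
    ring
  rw [hmain, Nat.factorial_succ]
  push_cast
  ring

private lemma pev_eq (P : MvPolynomial (Fin 2) ℝ) (x y : ℝ) :
    pev P x y = ∑ d ∈ P.support, P.coeff d * (x ^ d 0 * y ^ d 1) := by
  rw [pev, MvPolynomial.eval_eq']
  apply Finset.sum_congr rfl
  intro d _
  rw [Fin.prod_univ_two]
  simp

private lemma pev_hasDerivAt_fst (P : MvPolynomial (Fin 2) ℝ) (x y : ℝ) :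
    HasDerivAt (fun t => pev P t y)
      (∑ d ∈ P.support, P.coeff d * ((d 0) * x ^ (d 0 - 1) * y ^ d 1)) x := by
  have h : (fun t => pev P t y) = fun t => ∑ d ∈ P.support, P.coeff d * (t ^ d 0 * y ^ d 1) :=
    funext fun t => pev_eq P t y
  rw [h]
  apply HasDerivAt.fun_sum
  intro d _
  have hd := (((hasDerivAt_pow (d 0) x).mul_const (y ^ d 1)).const_mul (P.coeff d))
  exact hd
end LagAux

private noncomputable def gAux (α : ℝ) (m : ℕ) (c : ℝ) (a : ℕ) (x : ℝ) : ℝ :=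
  c * (lagMonic α m x * x ^ a * (Real.rpow x α * Real.exp (-x)))

private noncomputable def hAux (β : ℝ) (b : ℕ) (y : ℝ) : ℝ :=
  y ^ b * (Real.rpow y β * Real.exp (-y))

private lemma gAux_integrable (α : ℝ) (hα : -1 < α) (m : ℕ) (c : ℝ) (a : ℕ) :
    Integrable (gAux α m c a) (volume.restrict (Set.Ioi 0)) :=
  (lagMonic_weight_integrableOn α hα m a).const_mul c

private lemma hAux_integrable (β : ℝ) (hβ : -1 < β) (b : ℕ) :
    Integrable (hAux β b) (volume.restrict (Set.Ioi 0)) :=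
  weight_integrableOn β hβ b

/-- `Q_0^n(x,y) = q_n(w_α;x)` is `∇`-orthogonal to every polynomial of total degree `≤ n-1`. -/
theorem lagQ0_orthogonal (α β : ℝ) (hα : -1 < α) (hβ : -1 < β) (n : ℕ) (hn : 1 ≤ n)
    (P : MvPolynomial (Fin 2) ℝ) (hP : P.totalDegree < n) :
    lagGrad α β (fun x _ => lagQ α n x) (pev P) = 0 := by
  obtain ⟨m, rfl⟩ : ∃ m, n = m + 1 := ⟨n - 1, by omega⟩
  unfold lagGrad
  have hF : ∀ p : ℝ × ℝ,
      (deriv (fun t => (fun x _ => lagQ α (m+1) x) t p.2) p.1 * deriv (fun t => pev P t p.2) p.1 +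
        deriv (fun t => (fun x _ => lagQ α (m+1) x) p.1 t) p.2 * deriv (fun t => pev P p.1 t) p.2) *
      (Real.rpow p.1 α * Real.exp (-p.1) * (Real.rpow p.2 β * Real.exp (-p.2)))
      = ∑ d ∈ P.support,
          gAux α m (((m+1:ℕ):ℝ) * (P.coeff d * (d 0))) (d 0 - 1) p.1 * hAux β (d 1) p.2 := by
    intro p
    have h1 : deriv (fun t => lagQ α (m+1) t) p.1 = ((m+1:ℕ):ℝ) * lagMonic α m p.1 :=
      (lagQ_hasDerivAt α hα m p.1).deriv
    have h2 : deriv (fun _ : ℝ => lagQ α (m+1) p.1) p.2 = 0 := deriv_const _ _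
    have h3 : deriv (fun t => pev P t p.2) p.1
        = ∑ d ∈ P.support, P.coeff d * ((d 0) * p.1 ^ (d 0 - 1) * p.2 ^ d 1) :=
      (pev_hasDerivAt_fst P p.1 p.2).deriv
    show (deriv (fun t => lagQ α (m+1) t) p.1 * deriv (fun t => pev P t p.2) p.1 +
        deriv (fun _ : ℝ => lagQ α (m+1) p.1) p.2 * deriv (fun t => pev P p.1 t) p.2) *
      (Real.rpow p.1 α * Real.exp (-p.1) * (Real.rpow p.2 β * Real.exp (-p.2))) = _
    rw [h1, h2, h3, zero_mul, add_zero, Finset.mul_sum, Finset.sum_mul]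
    apply Finset.sum_congr rfl
    intro d _
    unfold gAux hAux
    ring
  rw [MeasureTheory.setIntegral_congr_fun (measurableSet_Ioi.prod measurableSet_Ioi)
    (fun p _ => hF p)]
  have hrestrict : (volume : Measure (ℝ×ℝ)).restrict ((Set.Ioi (0:ℝ)) ×ˢ (Set.Ioi (0:ℝ)))
      = (volume.restrict (Set.Ioi 0)).prod (volume.restrict (Set.Ioi 0)) := by
    rw [MeasureTheory.Measure.volume_eq_prod, MeasureTheory.Measure.prod_restrict]
  rw [hrestrict]
  rw [MeasureTheory.integral_finset_sum _ (fun d _ =>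
    (gAux_integrable α hα m _ _).mul_prod (hAux_integrable β hβ _))]
  rw [Finset.sum_eq_zero, mul_zero]
  intro d hd
  rw [MeasureTheory.integral_prod_mul]
  have hg0 : ∫ x, gAux α m (((m+1:ℕ):ℝ) * (P.coeff d * (d 0))) (d 0 - 1) x
      ∂(volume.restrict (Set.Ioi 0)) = 0 := by
    unfold gAux
    rw [MeasureTheory.integral_const_mul]
    rcases Nat.eq_zero_or_pos (d 0) with h0 | h0
    · rw [h0]
      simp
    · have hds : d 0 ≤ d.sum fun _ e => e := by
        refine Finset.single_le_sum (f := fun i => d i) (fun i _ => Nat.zero_le _) ?_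
        exact Finsupp.mem_support_iff.mpr (by omega)
      have hdt : d 0 ≤ P.totalDegree := le_trans hds (MvPolynomial.le_totalDegree hd)
      have hj : d 0 - 1 < m := by omega
      rw [lagMonic_orthogonal α hα m (d 0 - 1) hj, mul_zero]
  rw [hg0, zero_mul]
end

section
/- For the product Laguerre weight, define Q_k^n(x,y) = q_{n-k}(w_α;x) q_k(w_β;y) where q_m(w;x) = p_m(w;x) + m·p_{m-1}(w;x). Then for 1 ≤ k ≤ n-1: ∂_x Q_k^n = (n-k)[P_k^{n-1} + k·P_{k-1}^{n-2}] and ∂_y Q_k^n = k[P_{k-1}^{n-1} + (n-k)·P_{k-1}^{n-2}], where P_j^m(x,y) = p_{m-j}(w_α;x)p_j(w_β;y). -/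
open Finset MeasureTheory

set_option maxHeartbeats 1000000

noncomputable def cc (α : ℝ) (m j : ℕ) : ℝ :=
  (-1) ^ (m + j) * m.factorial * Real.Gamma ((m : ℝ) + α + 1) /
    (Real.Gamma ((j : ℝ) + α + 1) * (m - j).factorial * j.factorial)

lemma cc_self (α : ℝ) (hα : -1 < α) (m : ℕ) : cc α m m = 1 := by
  unfold cc
  have hG : Real.Gamma ((m : ℝ) + α + 1) ≠ 0 := by
    have : (0:ℝ) < (m:ℝ) + α + 1 := by have := Nat.cast_nonneg (α := ℝ) m; linarith
    exact (Real.Gamma_pos_of_pos this).ne'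
  have hf : ((m.factorial : ℝ)) ≠ 0 := by positivity
  rw [Nat.sub_self]
  simp [pow_add, pow_mul]
  field_simp
  rw [← pow_mul, mul_comm, pow_mul]
  norm_num [mul_comm]

lemma cc_key (α : ℝ) (hα : -1 < α) (j d : ℕ) :
    ((j : ℝ) + 1) * cc α (j + d + 2) (j + 1) +
      ((j : ℝ) + d + 2) * (((j : ℝ) + 1) * cc α (j + d + 1) (j + 1)) =
    ((j : ℝ) + d + 2) * cc α (j + d + 1) j := by
  unfold cc
  have h1 : (j + d + 2) - (j + 1) = d + 1 := by omega
  have h2 : (j + d + 1) - (j + 1) = d := by omega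
  have h3 : (j + d + 1) - j = d + 1 := by omega
  rw [h1, h2, h3]
  have e1 : (j + d + 2 : ℕ) + (j + 1) = 2 * j + d + 3 := by omega
  have e2 : (j + d + 1 : ℕ) + (j + 1) = 2 * j + d + 2 := by omega
  have e3 : (j + d + 1 : ℕ) + j = 2 * j + d + 1 := by omega
  rw [e1, e2, e3]
  have s1 : (-1 : ℝ) ^ (2 * j + d + 3) = -(-1) ^ d := by
    rw [pow_add, pow_add, pow_mul]; norm_num
  have s2 : (-1 : ℝ) ^ (2 * j + d + 2) = (-1) ^ d := by
    rw [pow_add, pow_add, pow_mul]; norm_num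
  have s3 : (-1 : ℝ) ^ (2 * j + d + 1) = -(-1) ^ d := by
    rw [pow_add, pow_add, pow_mul]; norm_num
  rw [s1, s2, s3]
  -- Gamma recurrences
  have hg1 : Real.Gamma (((j : ℝ) + d + 2) + α + 1) = (((j:ℝ) + d + 1) + α + 1) * Real.Gamma (((j:ℝ) + d + 1) + α + 1) := by
    have := Real.Gamma_add_one (s := ((j:ℝ) + d + 1) + α + 1) (by have := Nat.cast_nonneg (α := ℝ) j; have := Nat.cast_nonneg (α := ℝ) d; nlinarith)
    rw [← this]; ring_nf
  have hg2 : Real.Gamma (((j : ℝ) + 1) + α + 1) = ((j:ℝ) + α + 1) * Real.Gamma ((j:ℝ) + α + 1) := by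
    have := Real.Gamma_add_one (s := (j:ℝ) + α + 1) (by have := Nat.cast_nonneg (α := ℝ) j; nlinarith)
    rw [← this]; ring_nf
  have cast1 : ((j + d + 2 : ℕ) : ℝ) = (j:ℝ) + d + 2 := by push_cast; ring
  have cast2 : ((j + d + 1 : ℕ) : ℝ) = (j:ℝ) + d + 1 := by push_cast; ring
  have cast3 : ((j + 1 : ℕ) : ℝ) = (j:ℝ) + 1 := by push_cast; ring
  rw [cast1, cast2, cast3, hg1, hg2]
  have G1pos : 0 < Real.Gamma (((j:ℝ) + d + 1) + α + 1) := Real.Gamma_pos_of_pos (by nlinarith [Nat.cast_nonneg (α := ℝ) j, Nat.cast_nonneg (α := ℝ) d])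
  have G2pos : 0 < Real.Gamma ((j:ℝ) + α + 1) := Real.Gamma_pos_of_pos (by nlinarith [Nat.cast_nonneg (α := ℝ) j])
  have hfac1 : ((j + d + 2).factorial : ℝ) = ((j:ℝ) + d + 2) * (j + d + 1).factorial := by
    rw [show j + d + 2 = (j + d + 1) + 1 by ring, Nat.factorial_succ]; push_cast; ring
  have hfac2 : ((j + 1).factorial : ℝ) = ((j:ℝ) + 1) * j.factorial := by
    rw [Nat.factorial_succ]; push_cast; ring
  have hfac3 : ((d + 1).factorial : ℝ) = ((d:ℝ) + 1) * d.factorial := by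
    rw [Nat.factorial_succ]; push_cast; ring
  rw [hfac1, hfac2, hfac3]
  have hja : (j:ℝ) + α + 1 ≠ 0 := by nlinarith [Nat.cast_nonneg (α := ℝ) j]
  have hjf : (j.factorial : ℝ) ≠ 0 := by positivity
  have hdf : (d.factorial : ℝ) ≠ 0 := by positivity
  have hjd : ((j + d + 1).factorial : ℝ) ≠ 0 := by positivity
  have hd1 : (d:ℝ) + 1 ≠ 0 := by positivity
  have hj1 : (j:ℝ) + 1 ≠ 0 := by positivity
  field_simp
  ring

lemma lagMonic_eq (α : ℝ) (m : ℕ) (x : ℝ) :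
    lagMonic α m x = ∑ j ∈ Finset.range (m + 1), cc α m j * x ^ j := by
  unfold lagMonic laguerre cc
  rw [Finset.mul_sum]
  refine Finset.sum_congr rfl fun j _ => ?_
  rw [pow_add]
  ring

lemma hasDerivAt_lagMonic (α : ℝ) (m : ℕ) (x : ℝ) :
    HasDerivAt (fun x => lagMonic α m x)
      (∑ j ∈ Finset.range (m + 1), cc α m j * ((j : ℝ) * x ^ (j - 1))) x := by
  have hfun : (fun x => lagMonic α m x)
      = fun x => ∑ j ∈ Finset.range (m + 1), cc α m j * x ^ j :=
    funext fun t => lagMonic_eq α m t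
  rw [hfun]
  exact HasDerivAt.fun_sum fun j _ => (hasDerivAt_pow j x).const_mul _

lemma sum_key (α : ℝ) (hα : -1 < α) (m' : ℕ) (x : ℝ) :
    (∑ j ∈ Finset.range (m' + 2), cc α (m' + 1) j * ((j : ℝ) * x ^ (j - 1)))
      + ((m' : ℝ) + 1) * (∑ j ∈ Finset.range (m' + 1), cc α m' j * ((j : ℝ) * x ^ (j - 1)))
    = ((m' : ℝ) + 1) * ∑ j ∈ Finset.range (m' + 1), cc α m' j * x ^ j := by
  have key : ∀ i ∈ Finset.range m',
      cc α (m' + 1) (i + 1) * (((i : ℝ) + 1) * x ^ i)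
        + ((m' : ℝ) + 1) * (cc α m' (i + 1) * (((i : ℝ) + 1) * x ^ i))
      = ((m' : ℝ) + 1) * (cc α m' i * x ^ i) := by
    intro i hi
    rw [Finset.mem_range] at hi
    obtain ⟨d, rfl⟩ : ∃ d, m' = i + 1 + d := ⟨m' - 1 - i, by omega⟩
    have hk := cc_key α hα i d
    have e : i + 1 + d + 1 = i + d + 2 := by omega
    have e2 : i + 1 + d = i + d + 1 := by omega
    rw [e, e2]
    push_cast
    push_cast at hk
    linear_combination x ^ i * hk
  rw [Finset.sum_range_succ' (fun j => cc α (m' + 1) j * ((j : ℝ) * x ^ (j - 1))) (m' + 1),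
      Finset.sum_range_succ' (fun j => cc α m' j * ((j : ℝ) * x ^ (j - 1))) m']
  simp only [Nat.cast_zero, zero_mul, mul_zero, add_zero, Nat.add_sub_cancel, Nat.cast_add,
    Nat.cast_one]
  rw [Finset.sum_range_succ (fun i => cc α (m' + 1) (i + 1) * (((i : ℝ) + 1) * x ^ i)) m',
      Finset.sum_range_succ (fun j => cc α m' j * x ^ j) m']
  have hs := Finset.sum_congr rfl key
  rw [Finset.sum_add_distrib, ← Finset.mul_sum, ← Finset.mul_sum] at hs
  rw [cc_self α hα (m' + 1), cc_self α hα m']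
  linear_combination hs

lemma hasDerivAt_lagQ (α : ℝ) (hα : -1 < α) (m : ℕ) (hm : 1 ≤ m) (x : ℝ) :
    HasDerivAt (fun x => lagQ α m x) ((m : ℝ) * lagMonic α (m - 1) x) x := by
  obtain ⟨m', rfl⟩ : ∃ m', m = m' + 1 := ⟨m - 1, by omega⟩
  have hfun : (fun x => lagQ α (m' + 1) x)
      = fun x => lagMonic α (m' + 1) x + ((m' : ℝ) + 1) * lagMonic α m' x := by
    funext t
    simp [lagQ]
  rw [hfun]
  have h := (hasDerivAt_lagMonic α (m' + 1) x).add
    ((hasDerivAt_lagMonic α m' x).const_mul ((m' : ℝ) + 1))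
  refine h.congr_deriv (Eq.symm ?_)
  rw [Nat.add_sub_cancel, lagMonic_eq]
  push_cast
  exact (sum_key α hα m' x).symm

/-- Partial derivatives of `Q_k^n` for `1 ≤ k ≤ n-1` in the product Laguerre setting:
`∂_x Q_k^n = (n-k)[P_k^{n-1} + k P_{k-1}^{n-2}]` and
`∂_y Q_k^n = k[P_{k-1}^{n-1} + (n-k) P_{k-1}^{n-2}]`. -/
theorem lagQ2_partials (α β : ℝ) (hα : -1 < α) (hβ : -1 < β) (n k : ℕ)
    (hk : 1 ≤ k) (hkn' : k ≤ n - 1) (hn : 1 ≤ n) (x y : ℝ) :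
    deriv (fun t => lagQ2 α β n k t y) x
      = ((n : ℝ) - k) * (lagP α β (n - 1) k x y + (k : ℝ) * lagP α β (n - 2) (k - 1) x y) ∧
    deriv (fun t => lagQ2 α β n k x t) y
      = (k : ℝ) * (lagP α β (n - 1) (k - 1) x y
          + ((n : ℝ) - k) * lagP α β (n - 2) (k - 1) x y) := by
  have hkn2 : k + 1 ≤ n := by omega
  have hnk1 : 1 ≤ n - k := by omega
  constructor
  · have hd : HasDerivAt (fun t => lagQ2 α β n k t y)
        ((((n - k : ℕ)) : ℝ) * lagMonic α (n - k - 1) x * lagQ β k y) x := by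
      simp only [lagQ2]
      exact (hasDerivAt_lagQ α hα (n - k) hnk1 x).mul_const _
    rw [hd.deriv]
    have e1 : (n - 1) - k = n - k - 1 := by omega
    have e2 : (n - 2) - (k - 1) = n - k - 1 := by omega
    have e3 : ((n - k : ℕ) : ℝ) = (n : ℝ) - k := by
      rw [Nat.cast_sub (by omega)]
    simp only [lagP, lagQ, e1, e2, e3]
    ring
  · have hd : HasDerivAt (fun t => lagQ2 α β n k x t)
        ((k : ℝ) * lagMonic β (k - 1) y * lagQ α (n - k) x) y := by
      have := ((hasDerivAt_lagQ β hβ k hk y).const_mul (lagQ α (n - k) x))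
      simp only [lagQ2]
      refine this.congr_deriv ?_
      ring
    rw [hd.deriv]
    have e1 : (n - 1) - (k - 1) = n - k := by omega
    have e2 : (n - 2) - (k - 1) = n - k - 1 := by omega
    have e3 : ((n - k : ℕ) : ℝ) = (n : ℝ) - k := by
      rw [Nat.cast_sub (by omega)]
    simp only [lagP, lagQ, e1, e2, e3]
    ring
end

section
/- For the product Laguerre weight with parameters α, β > -1, the Gram matrix D_n := ⟨𝕼_n, 𝕼_n^T⟩_∇ of the vector 𝕼_n = (Q_0^n,...,Q_n^n)^T is diagonal, with entries d_j^n = (n-j)² h_j^{n-1} + j² h_{j-1}^{n-1} + 2 j² (n-j)² h_{j-1}^{n-2}, where h_k^m = (m-k)! k! (α+1)_{m-k} (β+1)_k. -/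
open Finset MeasureTheory

section Aux
open Polynomial

noncomputable def lagCoef (α : ℝ) (n k : ℕ) : ℝ :=
  (-1) ^ k * (Real.Gamma ((n : ℝ) + α + 1) /
      (Real.Gamma ((k : ℝ) + α + 1) * (n - k).factorial)) / k.factorial

noncomputable def LP (α : ℝ) (n : ℕ) : Polynomial ℝ :=
  ∑ k ∈ Finset.range (n + 1), Polynomial.C (lagCoef α n k) * Polynomial.X ^ k

noncomputable def MP (α : ℝ) (n : ℕ) : Polynomial ℝ :=
  Polynomial.C ((-1 : ℝ) ^ n * (n.factorial : ℝ)) * LP α n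

noncomputable def QP (α : ℝ) (n : ℕ) : Polynomial ℝ :=
  MP α n + Polynomial.C (n : ℝ) * MP α (n - 1)

lemma laguerre_eval (α : ℝ) (n : ℕ) (x : ℝ) : laguerre α n x = (LP α n).eval x := by
  simp only [laguerre, LP, lagCoef, eval_finset_sum, eval_mul, eval_C, eval_pow, eval_X]
  exact Finset.sum_congr rfl fun k _ => by ring

lemma lagMonic_eval (α : ℝ) (n : ℕ) (x : ℝ) : lagMonic α n x = (MP α n).eval x := by
  simp [lagMonic, MP, laguerre_eval]

lemma lagQ_eval (α : ℝ) (n : ℕ) (x : ℝ) : lagQ α n x = (QP α n).eval x := by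
  simp [lagQ, QP, lagMonic_eval]

lemma Gamma_shift (x : ℝ) (hx : 0 < x) (l : ℕ) :
    Real.Gamma (x + l) = (ascPochhammer ℝ l).eval x * Real.Gamma x := by
  induction l with
  | zero => simp
  | succ l ih =>
    have h1 : x + (l + 1 : ℕ) = (x + l) + 1 := by push_cast; ring
    have h2 : x + (l : ℝ) ≠ 0 := by positivity
    rw [h1, Real.Gamma_add_one h2, ih, ascPochhammer_succ_right]
    simp [mul_comm, mul_assoc, mul_left_comm]

lemma altsum_s10 (l : ℕ) : ∀ (m : ℕ) (c : ℝ), l ≤ m →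
    ∑ k ∈ range (m + 1), (-1 : ℝ) ^ k * (m.choose k) * (ascPochhammer ℝ l).eval (c + k)
      = if m = l then (-1 : ℝ) ^ m * m.factorial else 0 := by
  induction l with
  | zero =>
    intro m c _
    simp only [ascPochhammer_zero, eval_one, mul_one]
    have h1 := @Int.alternating_sum_range_choose m
    have h2 : ∑ k ∈ range (m + 1), (-1 : ℝ) ^ k * (m.choose k)
        = (((∑ i ∈ range (m + 1), (-1 : ℤ) ^ i * (m.choose i) : ℤ)) : ℝ) := by
      push_cast; rfl
    rw [h2, h1]
    split <;> simp_all
  | succ l ih =>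
    intro m c hm
    obtain ⟨m', rfl⟩ : ∃ m', m = m' + 1 := ⟨m - 1, by omega⟩
    have hl : l ≤ m' := by omega
    set Q : ℕ → ℝ := fun k => (ascPochhammer ℝ (l + 1)).eval (c + k) with hQ
    have key : ∀ k : ℕ, Q k - Q (k + 1)
        = -((l : ℝ) + 1) * (ascPochhammer ℝ l).eval ((c + 1) + k) := by
      intro k
      have e1 : Q k = (c + k) * (ascPochhammer ℝ l).eval ((c + k) + 1) := by
        rw [hQ]; simp [ascPochhammer_succ_left, eval_comp]
      have e2 : Q (k + 1) = (ascPochhammer ℝ l).eval (c + (k + 1)) * ((c + (k + 1)) + l) := by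
        rw [hQ]; simp [ascPochhammer_succ_right]
      rw [e1, e2]
      have e3 : c + ((k : ℝ) + 1) = c + (k : ℝ) + 1 := by ring
      have e4 : (c + 1) + (k : ℝ) = c + (k : ℝ) + 1 := by ring
      rw [e3, e4]; ring
    -- claim1 : LHS = ∑ over range (m'+1) of (-1)^k choose(m',k) (Q k - Q (k+1))
    have claim1 : ∑ k ∈ range (m' + 1 + 1), (-1 : ℝ) ^ k * ((m' + 1).choose k) * Q k
        = ∑ k ∈ range (m' + 1), (-1 : ℝ) ^ k * (m'.choose k) * (Q k - Q (k + 1)) := by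
      rw [Finset.sum_range_succ' (fun k => (-1 : ℝ) ^ k * ((m' + 1).choose k) * Q k) (m' + 1)]
      have e5 : ∀ k ∈ range (m' + 1), (-1 : ℝ) ^ (k + 1) * ((m' + 1).choose (k + 1)) * Q (k + 1)
          = -((-1 : ℝ) ^ k * (m'.choose k) * Q (k + 1))
            + (-1 : ℝ) ^ (k + 1) * (m'.choose (k + 1)) * Q (k + 1) := by
        intro k _
        have : ((m' + 1).choose (k + 1) : ℝ) = m'.choose k + m'.choose (k + 1) := by
          exact_mod_cast congrArg (Nat.cast : ℕ → ℝ) (Nat.choose_succ_succ m' k)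
        rw [this]; ring
      rw [Finset.sum_congr rfl e5, Finset.sum_add_distrib]
      have e6 : ∑ k ∈ range (m' + 1), (-1 : ℝ) ^ (k + 1) * (m'.choose (k + 1)) * Q (k + 1)
          = ∑ k ∈ range m', (-1 : ℝ) ^ (k + 1) * (m'.choose (k + 1)) * Q (k + 1) := by
        rw [Finset.sum_range_succ]; simp [Nat.choose_succ_self]
      have e7 : ∑ k ∈ range m', (-1 : ℝ) ^ (k + 1) * (m'.choose (k + 1)) * Q (k + 1)
            + (-1 : ℝ) ^ 0 * (m'.choose 0) * Q 0
          = ∑ k ∈ range (m' + 1), (-1 : ℝ) ^ k * (m'.choose k) * Q k :=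
        (Finset.sum_range_succ' (fun k => (-1 : ℝ) ^ k * (m'.choose k) * Q k) m').symm
      have e8 : ∑ k ∈ range (m' + 1), (-1 : ℝ) ^ k * (m'.choose k) * (Q k - Q (k + 1))
          = ∑ k ∈ range (m' + 1), (-1 : ℝ) ^ k * (m'.choose k) * Q k
            - ∑ k ∈ range (m' + 1), (-1 : ℝ) ^ k * (m'.choose k) * Q (k + 1) := by
        rw [← Finset.sum_sub_distrib]; exact Finset.sum_congr rfl fun k _ => by ring
      rw [e8, ← e7, e6, Finset.sum_neg_distrib]
      simp only [Nat.choose_zero_right, Nat.cast_one, pow_zero, one_mul, Nat.add_comm 1 m']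
      ring
    rw [claim1, Finset.sum_congr rfl (fun k _ => by rw [key k]),
        show ∀ s : Finset ℕ, ∀ f : ℕ → ℝ, ∑ k ∈ s, (-1:ℝ)^k * (m'.choose k) * (-((l:ℝ)+1) * f k)
          = -((l:ℝ)+1) * ∑ k ∈ s, (-1:ℝ)^k * (m'.choose k) * f k from
          fun s f => by rw [Finset.mul_sum]; exact Finset.sum_congr rfl fun k _ => by ring]
    rw [ih m' (c + 1) hl]
    by_cases h : m' = l
    · subst h
      simp only [if_pos rfl]
      rw [Nat.factorial_succ]
      push_cast
      ring
    · simp [h]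

variable {α : ℝ}


lemma mono_integrable (hα : -1 < α) (k : ℕ) :
    IntegrableOn (fun x : ℝ => x ^ k * (x ^ α * Real.exp (-x))) (Set.Ioi 0) := by
  have h : (0 : ℝ) < (k : ℝ) + α + 1 := by
    have : (0:ℝ) ≤ k := Nat.cast_nonneg k
    linarith
  refine (Real.GammaIntegral_convergent h).congr_fun ?_ measurableSet_Ioi
  intro x hx
  have hx' : (0 : ℝ) < x := hx
  dsimp only
  rw [show (k : ℝ) + α + 1 - 1 = (k : ℝ) + α by ring, Real.rpow_add hx',
    Real.rpow_natCast]
  ring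

lemma poly_integrable (hα : -1 < α) (P : Polynomial ℝ) :
    IntegrableOn (fun x : ℝ => P.eval x * (x ^ α * Real.exp (-x))) (Set.Ioi 0) := by
  have h : (fun x : ℝ => P.eval x * (x ^ α * Real.exp (-x)))
      = fun x => ∑ k ∈ range (P.natDegree + 1),
          P.coeff k * (x ^ k * (x ^ α * Real.exp (-x))) := by
    funext x
    rw [Polynomial.eval_eq_sum_range, Finset.sum_mul]
    exact Finset.sum_congr rfl fun k _ => by ring
  rw [h]
  apply integrable_finset_sum
  intro k _
  exact (mono_integrable hα k).const_mul _

lemma mono_integral (hα : -1 < α) (k : ℕ) :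
    ∫ x in Set.Ioi 0, x ^ k * (x ^ α * Real.exp (-x)) = Real.Gamma ((k : ℝ) + α + 1) := by
  have h : (0 : ℝ) < (k : ℝ) + α + 1 := by
    have : (0:ℝ) ≤ k := Nat.cast_nonneg k
    linarith
  rw [Real.Gamma_eq_integral h]
  refine setIntegral_congr_fun measurableSet_Ioi fun x hx => ?_
  have hx' : (0 : ℝ) < x := hx
  rw [show (k : ℝ) + α + 1 - 1 = (k : ℝ) + α by ring, Real.rpow_add hx',
    Real.rpow_natCast]
  ring

lemma MP_moment (hα : -1 < α) (m l : ℕ) (hl : l ≤ m) :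
    ∫ x in Set.Ioi 0, (MP α m).eval x * x ^ l * (x ^ α * Real.exp (-x))
      = if l = m then (m.factorial : ℝ) * Real.Gamma ((m : ℝ) + α + 1) else 0 := by
  have h1 : (fun x : ℝ => (MP α m).eval x * x ^ l * (x ^ α * Real.exp (-x)))
      = fun x => ∑ k ∈ range (m + 1),
          ((-1 : ℝ) ^ m * (m.factorial : ℝ) * lagCoef α m k)
            * (x ^ (k + l) * (x ^ α * Real.exp (-x))) := by
    funext x
    simp only [MP, LP, eval_mul, eval_C, eval_finset_sum, eval_pow, eval_X]
    rw [Finset.mul_sum, Finset.sum_mul, Finset.sum_mul]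
    exact Finset.sum_congr rfl fun k _ => by rw [pow_add]; ring
  rw [h1, integral_finset_sum _ (fun k _ => ((mono_integrable hα (k + l)).const_mul _))]
  simp only [integral_const_mul, mono_integral hα]
  have h2 : ∀ k ∈ range (m + 1),
      (-1 : ℝ) ^ m * (m.factorial : ℝ) * lagCoef α m k * Real.Gamma ((↑(k + l) : ℝ) + α + 1)
        = ((-1 : ℝ) ^ m * Real.Gamma ((m : ℝ) + α + 1))
            * ((-1 : ℝ) ^ k * (m.choose k) * (ascPochhammer ℝ l).eval ((α + 1) + k)) := by
    intro k hk
    have hkm : k ≤ m := by simpa using Nat.lt_succ_iff.mp (Finset.mem_range.mp hk)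
    have hpos : (0 : ℝ) < (k : ℝ) + α + 1 := by
      have : (0:ℝ) ≤ k := Nat.cast_nonneg k
      linarith
    have e1 : ((↑(k + l) : ℝ) + α + 1) = ((k : ℝ) + α + 1) + (l : ℕ) := by push_cast; ring
    have e2 : (α + 1) + (k : ℝ) = (k : ℝ) + α + 1 := by ring
    rw [e1, Gamma_shift _ hpos, e2, Nat.cast_choose ℝ hkm, lagCoef]
    have g1 : Real.Gamma ((k : ℝ) + α + 1) ≠ 0 := (Real.Gamma_pos_of_pos hpos).ne'
    have g2 : ((k.factorial : ℝ)) ≠ 0 := by exact_mod_cast k.factorial_ne_zero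
    have g3 : (((m - k).factorial : ℝ)) ≠ 0 := by exact_mod_cast (m - k).factorial_ne_zero
    field_simp
  rw [Finset.sum_congr rfl h2, ← Finset.mul_sum, altsum_s10 l m (α + 1) hl]
  have hone : (-1 : ℝ) ^ m * (-1 : ℝ) ^ m = 1 := by
    rw [← pow_add]; exact Even.neg_one_pow ⟨m, rfl⟩
  by_cases h : m = l
  · subst h; simp only [if_true]; linear_combination (Real.Gamma ((m:ℝ)+α+1) * (m.factorial:ℝ)) * hone
  · simp [h, Ne.symm h]

noncomputable def OV (α : ℝ) (m l : ℕ) : ℝ :=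
  if m = l then (m.factorial : ℝ) * (ascPochhammer ℝ m).eval (α + 1) * Real.Gamma (α + 1) else 0


lemma MM_integrable (hα : -1 < α) (P Q : Polynomial ℝ) :
    Integrable (fun x : ℝ => P.eval x * Q.eval x * (x ^ α * Real.exp (-x)))
      (volume.restrict (Set.Ioi 0)) := by
  have h := poly_integrable hα (P * Q)
  simpa only [eval_mul, IntegrableOn] using h

lemma Mx_integrable (hα : -1 < α) (P : Polynomial ℝ) (j : ℕ) :
    Integrable (fun x : ℝ => P.eval x * x ^ j * (x ^ α * Real.exp (-x)))
      (volume.restrict (Set.Ioi 0)) := by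
  have h := poly_integrable hα (P * Polynomial.X ^ j)
  simpa only [eval_mul, eval_pow, eval_X, IntegrableOn] using h

lemma MP_ortho_aux (hα : -1 < α) (m l : ℕ) (hl : l ≤ m) :
    ∫ x in Set.Ioi 0, (MP α m).eval x * (MP α l).eval x * (x ^ α * Real.exp (-x))
      = OV α m l := by
  have h1 : (fun x : ℝ => (MP α m).eval x * (MP α l).eval x * (x ^ α * Real.exp (-x)))
      = fun x => ∑ j ∈ range (l + 1),
          ((-1 : ℝ) ^ l * (l.factorial : ℝ) * lagCoef α l j)
            * ((MP α m).eval x * x ^ j * (x ^ α * Real.exp (-x))) := by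
    funext x
    conv_lhs => rw [show (MP α l).eval x
      = ∑ j ∈ range (l + 1), ((-1 : ℝ) ^ l * (l.factorial : ℝ) * lagCoef α l j) * x ^ j by
        simp only [MP, LP, eval_mul, eval_C, eval_finset_sum, eval_pow, eval_X, Finset.mul_sum]
        exact Finset.sum_congr rfl fun j _ => by ring]
    rw [Finset.mul_sum, Finset.sum_mul]
    exact Finset.sum_congr rfl fun j _ => by ring
  rw [h1, integral_finset_sum _ (fun j _ => (Mx_integrable hα (MP α m) j).const_mul _)]
  simp only [integral_const_mul]
  have h2 : ∀ j ∈ range (l + 1),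
      ((-1 : ℝ) ^ l * (l.factorial : ℝ) * lagCoef α l j)
          * ∫ x in Set.Ioi 0, (MP α m).eval x * x ^ j * (x ^ α * Real.exp (-x))
        = if j = m then ((-1 : ℝ) ^ l * (l.factorial : ℝ) * lagCoef α l j)
            * ((m.factorial : ℝ) * Real.Gamma ((m : ℝ) + α + 1)) else 0 := by
    intro j hj
    have hjl : j ≤ l := Nat.lt_succ_iff.mp (Finset.mem_range.mp hj)
    rw [MP_moment hα m j (le_trans hjl hl), mul_ite, mul_zero]
  rw [Finset.sum_congr rfl h2, Finset.sum_ite_eq' (range (l + 1)) m]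
  by_cases h : m = l
  · subst h
    have hmem : m ∈ range (m + 1) := Finset.self_mem_range_succ m
    rw [if_pos hmem, OV, if_pos rfl]
    have hpos : (0 : ℝ) < (m : ℝ) + α + 1 := by
      have : (0:ℝ) ≤ m := Nat.cast_nonneg m; linarith
    have g1 : Real.Gamma ((m : ℝ) + α + 1) ≠ 0 := (Real.Gamma_pos_of_pos hpos).ne'
    have hcoef : lagCoef α m m = (-1 : ℝ) ^ m / m.factorial := by
      rw [lagCoef, Nat.sub_self]
      simp [Nat.factorial_zero]
      field_simp
    rw [hcoef]
    have hfac : ((m.factorial : ℝ)) ≠ 0 := by exact_mod_cast m.factorial_ne_zero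
    have hone : (-1 : ℝ) ^ m * (-1 : ℝ) ^ m = 1 := by
      rw [← pow_add]; exact Even.neg_one_pow ⟨m, rfl⟩
    have hsh : Real.Gamma ((m : ℝ) + α + 1) = (ascPochhammer ℝ m).eval (α + 1) * Real.Gamma (α + 1) := by
      rw [show (m : ℝ) + α + 1 = (α + 1) + m by ring, Gamma_shift _ (by linarith) m]
    rw [hsh]
    field_simp
    linear_combination ((ascPochhammer ℝ m).eval (α + 1) * Real.Gamma (α + 1)) * hone
  · have hmem : m ∉ range (l + 1) := by
      simp only [Finset.mem_range]; omega
    rw [if_neg hmem, OV, if_neg h]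

lemma MP_ortho (hα : -1 < α) (m l : ℕ) :
    ∫ x in Set.Ioi 0, (MP α m).eval x * (MP α l).eval x * (x ^ α * Real.exp (-x))
      = OV α m l := by
  rcases le_total l m with h | h
  · exact MP_ortho_aux hα m l h
  · have h1 : (fun x : ℝ => (MP α m).eval x * (MP α l).eval x * (x ^ α * Real.exp (-x)))
        = fun x => (MP α l).eval x * (MP α m).eval x * (x ^ α * Real.exp (-x)) := by
      funext x; ring
    rw [h1, MP_ortho_aux hα l m h, OV, OV]
    by_cases he : m = l
    · subst he; simp
    · rw [if_neg he, if_neg (Ne.symm he)]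

lemma int4 {μ : Measure ℝ} (f1 f2 f3 f4 : ℝ → ℝ) (h1 : Integrable f1 μ)
    (h2 : Integrable f2 μ) (h3 : Integrable f3 μ) (h4 : Integrable f4 μ) :
    ∫ x, (f1 x + (f2 x + (f3 x + f4 x))) ∂μ
      = (∫ x, f1 x ∂μ) + (∫ x, f2 x ∂μ) + (∫ x, f3 x ∂μ) + (∫ x, f4 x ∂μ) := by
  have A : Integrable (fun x => f2 x + (f3 x + f4 x)) μ := h2.add (h3.add h4)
  have B : Integrable (fun x => f3 x + f4 x) μ := h3.add h4
  rw [integral_add h1 A, integral_add h2 B, integral_add h3 h4]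
  ring

lemma QQ_ortho (hα : -1 < α) (a b : ℕ) :
    ∫ x in Set.Ioi 0, (QP α a).eval x * (QP α b).eval x * (x ^ α * Real.exp (-x))
      = OV α a b + b * OV α a (b - 1) + a * OV α (a - 1) b
          + a * b * OV α (a - 1) (b - 1) := by
  have key := int4 (μ := volume.restrict (Set.Ioi 0))
      (fun x => (MP α a).eval x * (MP α b).eval x * (x ^ α * Real.exp (-x)))
      (fun x => (b : ℝ) * ((MP α a).eval x * (MP α (b - 1)).eval x * (x ^ α * Real.exp (-x))))
      (fun x => (a : ℝ) * ((MP α (a - 1)).eval x * (MP α b).eval x * (x ^ α * Real.exp (-x))))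
      (fun x => (a : ℝ) * (b : ℝ) * ((MP α (a - 1)).eval x * (MP α (b - 1)).eval x * (x ^ α * Real.exp (-x))))
      (MM_integrable hα _ _)
      ((MM_integrable hα (MP α a) (MP α (b-1))).const_mul _)
      ((MM_integrable hα (MP α (a-1)) (MP α b)).const_mul _)
      ((MM_integrable hα (MP α (a-1)) (MP α (b-1))).const_mul _)
  have h1 : (fun x : ℝ => (QP α a).eval x * (QP α b).eval x * (x ^ α * Real.exp (-x)))
      = fun x => (MP α a).eval x * (MP α b).eval x * (x ^ α * Real.exp (-x))
          + ((b : ℝ) * ((MP α a).eval x * (MP α (b - 1)).eval x * (x ^ α * Real.exp (-x)))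
          + ((a : ℝ) * ((MP α (a - 1)).eval x * (MP α b).eval x * (x ^ α * Real.exp (-x)))
          + (a : ℝ) * (b : ℝ) * ((MP α (a - 1)).eval x * (MP α (b - 1)).eval x * (x ^ α * Real.exp (-x))))) := by
    funext x
    simp only [QP, eval_add, eval_mul, eval_C]
    ring
  rw [h1, key]
  simp only [integral_const_mul, MP_ortho hα]

lemma LP_coeff (n t : ℕ) : (LP α n).coeff t = if t ≤ n then lagCoef α n t else 0 := by
  rw [LP, Polynomial.finset_sum_coeff]
  simp only [coeff_C_mul, coeff_X_pow, mul_ite, mul_one, mul_zero]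
  rw [Finset.sum_ite_eq (range (n + 1)) t]
  simp [Nat.lt_succ_iff]

lemma MP_coeff (n t : ℕ) :
    (MP α n).coeff t = if t ≤ n then (-1 : ℝ) ^ n * (n.factorial : ℝ) * lagCoef α n t else 0 := by
  rw [MP, coeff_C_mul, LP_coeff, mul_ite, mul_zero]

set_option maxHeartbeats 2000000 in
lemma coeff_id (hα : -1 < α) (m t : ℕ) (h : t ≤ m) :
    (-1 : ℝ) ^ (m + 1) * ((m + 1).factorial : ℝ) * lagCoef α (m + 1) (t + 1) * ((t : ℝ) + 1)
      + (if t + 1 ≤ m then (-1 : ℝ) ^ m * (m.factorial : ℝ) * lagCoef α m (t + 1) * ((t : ℝ) + 1) else 0)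
        * ((m : ℝ) + 1)
      = ((m : ℝ) + 1) * ((-1 : ℝ) ^ m * (m.factorial : ℝ) * lagCoef α m t) := by
  have hm : (0 : ℝ) < (m : ℝ) + α + 1 := by
    have : (0:ℝ) ≤ m := Nat.cast_nonneg m; linarith
  have ht : (0 : ℝ) < (t : ℝ) + α + 1 := by
    have : (0:ℝ) ≤ t := Nat.cast_nonneg t; linarith
  have hGm : Real.Gamma ((↑(m + 1) : ℝ) + α + 1)
      = ((m : ℝ) + α + 1) * Real.Gamma ((m : ℝ) + α + 1) := by
    rw [show (↑(m + 1) : ℝ) + α + 1 = ((m : ℝ) + α + 1) + 1 by push_cast; ring,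
      Real.Gamma_add_one hm.ne']
  have hGt : Real.Gamma ((↑(t + 1) : ℝ) + α + 1)
      = ((t : ℝ) + α + 1) * Real.Gamma ((t : ℝ) + α + 1) := by
    rw [show (↑(t + 1) : ℝ) + α + 1 = ((t : ℝ) + α + 1) + 1 by push_cast; ring,
      Real.Gamma_add_one ht.ne']
  have g1 : Real.Gamma ((m : ℝ) + α + 1) ≠ 0 := (Real.Gamma_pos_of_pos hm).ne'
  have g2 : Real.Gamma ((t : ℝ) + α + 1) ≠ 0 := (Real.Gamma_pos_of_pos ht).ne'
  have hsub : m + 1 - (t + 1) = m - t := Nat.succ_sub_succ m t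
  rcases eq_or_lt_of_le h with rfl | hlt
  · -- t = m
    simp only [lagCoef, hsub, Nat.sub_self, Nat.factorial_zero, Nat.cast_one, mul_one,
      if_neg (show ¬ t + 1 ≤ t by omega), add_zero, zero_mul]
    rw [hGt]
    have hfac : ((t.factorial : ℝ)) ≠ 0 := by exact_mod_cast t.factorial_ne_zero
    rw [Nat.factorial_succ]
    push_cast
    rw [pow_succ]
    field_simp
  · -- t < m
    have hif : t + 1 ≤ m := hlt
    rw [if_pos hif]
    obtain ⟨d, rfl⟩ : ∃ d, m = t + d + 1 := ⟨m - t - 1, by omega⟩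
    have hs1 : t + d + 1 - t = d + 1 := by omega
    have hs2 : t + d + 1 - (t + 1) = d := by omega
    simp only [lagCoef, hsub, hs1, hs2]
    rw [hGm, hGt, Nat.factorial_succ t, Nat.factorial_succ d, Nat.factorial_succ (t + d + 1)]
    have f1 : ((t.factorial : ℝ)) ≠ 0 := by exact_mod_cast t.factorial_ne_zero
    have f2 : ((d.factorial : ℝ)) ≠ 0 := by exact_mod_cast d.factorial_ne_zero
    have f3 : (((t + d + 1).factorial : ℝ)) ≠ 0 := by exact_mod_cast (t + d + 1).factorial_ne_zero
    push_cast
    rw [pow_succ, pow_succ]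
    field_simp
    ring

lemma QP_derivative (hα : -1 < α) (n : ℕ) :
    Polynomial.derivative (QP α n) = Polynomial.C (n : ℝ) * MP α (n - 1) := by
  cases n with
  | zero =>
    ext t
    rw [Polynomial.coeff_derivative]
    simp only [QP, coeff_add, coeff_C_mul, MP_coeff, Nat.zero_sub, Nat.cast_zero, zero_mul,
      if_neg (by omega : ¬ t + 1 ≤ 0), zero_add, mul_zero, coeff_zero]
  | succ m =>
    ext t
    rw [Polynomial.coeff_derivative]
    simp only [QP, coeff_add, coeff_C_mul, MP_coeff, Nat.add_sub_cancel]
    by_cases h : t ≤ m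
    · rw [if_pos (by omega : t + 1 ≤ m + 1), if_pos h]
      have key := coeff_id hα m t h
      by_cases h2 : t + 1 ≤ m
      · rw [if_pos h2] at key ⊢
        push_cast at key ⊢
        linear_combination key
      · rw [if_neg h2] at key ⊢
        push_cast at key ⊢
        linear_combination key
    · rw [if_neg (by omega : ¬ t + 1 ≤ m + 1), if_neg (by omega : ¬ t + 1 ≤ m), if_neg h]
      simp

lemma deriv_lagQ_mul_const (hα : -1 < α) (N : ℕ) (c x : ℝ) :
    deriv (fun t => lagQ α N t * c) x = (N : ℝ) * lagMonic α (N - 1) x * c := by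
  have h : (fun t => lagQ α N t * c) = fun t => (QP α N).eval t * c :=
    funext fun y => by rw [lagQ_eval]
  rw [h, (((QP α N).hasDerivAt x).mul_const c).deriv, QP_derivative hα, eval_mul, eval_C,
    ← lagMonic_eval]

lemma deriv_const_mul_lagQ (hα : -1 < α) (N : ℕ) (c x : ℝ) :
    deriv (fun t => c * lagQ α N t) x = c * ((N : ℝ) * lagMonic α (N - 1) x) := by
  have h : (fun t => c * lagQ α N t) = fun t => c * (QP α N).eval t :=
    funext fun y => by rw [lagQ_eval]
  rw [h, (((QP α N).hasDerivAt x).const_mul c).deriv, QP_derivative hα, eval_mul, eval_C,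
    ← lagMonic_eval]

end Aux

/-- The Gram matrix `D_n = ⟨𝕼_n, 𝕼_n^T⟩_∇` for the product Laguerre weight is diagonal,
with diagonal entries `d_j^n = (n-j)² h_j^{n-1} + j² h_{j-1}^{n-1} + 2 j² (n-j)² h_{j-1}^{n-2}`. -/
theorem lagGrad_gram_diagonal (α β : ℝ) (hα : -1 < α) (hβ : -1 < β) (n : ℕ)
    (i j : ℕ) (hi : i ≤ n) (hj : j ≤ n) :
    lagGrad α β (lagQ2 α β n i) (lagQ2 α β n j)
      = if i = j then
          ((n : ℝ) - j) ^ 2 * hkn α β j (n - 1) + (j : ℝ) ^ 2 * hkn α β (j - 1) (n - 1)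
            + 2 * (j : ℝ) ^ 2 * ((n : ℝ) - j) ^ 2 * hkn α β (j - 1) (n - 2)
        else 0 := by
  have hΓα : Real.Gamma (α + 1) ≠ 0 := (Real.Gamma_pos_of_pos (by linarith)).ne'
  have hΓβ : Real.Gamma (β + 1) ≠ 0 := (Real.Gamma_pos_of_pos (by linarith)).ne'
  -- the integrand in product form
  have hfun : (fun p : ℝ × ℝ =>
      (deriv (fun t => lagQ2 α β n i t p.2) p.1 * deriv (fun t => lagQ2 α β n j t p.2) p.1 +
        deriv (fun t => lagQ2 α β n i p.1 t) p.2 * deriv (fun t => lagQ2 α β n j p.1 t) p.2) *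
      (Real.rpow p.1 α * Real.exp (-p.1) * (Real.rpow p.2 β * Real.exp (-p.2))))
      = fun p : ℝ × ℝ =>
        ((((n - i : ℕ) : ℝ) * ((n - j : ℕ) : ℝ)) *
            ((MP α (n - i - 1)).eval p.1 * (MP α (n - j - 1)).eval p.1
              * (p.1 ^ α * Real.exp (-p.1)))) *
          ((QP β i).eval p.2 * (QP β j).eval p.2 * (p.2 ^ β * Real.exp (-p.2)))
        + ((QP α (n - i)).eval p.1 * (QP α (n - j)).eval p.1 * (p.1 ^ α * Real.exp (-p.1))) *
          ((((i : ℝ)) * ((j : ℝ))) *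
            ((MP β (i - 1)).eval p.2 * (MP β (j - 1)).eval p.2
              * (p.2 ^ β * Real.exp (-p.2)))) := by
    funext p
    obtain ⟨x, y⟩ := p
    simp only [lagQ2]
    rw [deriv_lagQ_mul_const hα (n - i) (lagQ β i y) x,
        deriv_lagQ_mul_const hα (n - j) (lagQ β j y) x,
        deriv_const_mul_lagQ hβ i (lagQ α (n - i) x) y,
        deriv_const_mul_lagQ hβ j (lagQ α (n - j) x) y]
    simp only [lagQ_eval, lagMonic_eval, Real.rpow_eq_pow]
    ring
  rw [lagGrad, hfun, Measure.volume_eq_prod, ← Measure.prod_restrict]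
  have hI1 : Integrable (fun p : ℝ × ℝ =>
      ((((n - i : ℕ) : ℝ) * ((n - j : ℕ) : ℝ)) *
          ((MP α (n - i - 1)).eval p.1 * (MP α (n - j - 1)).eval p.1
            * (p.1 ^ α * Real.exp (-p.1)))) *
        ((QP β i).eval p.2 * (QP β j).eval p.2 * (p.2 ^ β * Real.exp (-p.2))))
      ((volume.restrict (Set.Ioi 0)).prod (volume.restrict (Set.Ioi 0))) :=
    ((MM_integrable hα (MP α (n - i - 1)) (MP α (n - j - 1))).const_mul _).mul_prod
      (MM_integrable hβ (QP β i) (QP β j))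
  have hI2 : Integrable (fun p : ℝ × ℝ =>
      ((QP α (n - i)).eval p.1 * (QP α (n - j)).eval p.1 * (p.1 ^ α * Real.exp (-p.1))) *
        ((((i : ℝ)) * ((j : ℝ))) *
          ((MP β (i - 1)).eval p.2 * (MP β (j - 1)).eval p.2 * (p.2 ^ β * Real.exp (-p.2)))))
      ((volume.restrict (Set.Ioi 0)).prod (volume.restrict (Set.Ioi 0))) :=
    (MM_integrable hα (QP α (n - i)) (QP α (n - j))).mul_prod
      ((MM_integrable hβ (MP β (i - 1)) (MP β (j - 1))).const_mul _)
  have k1 := integral_prod_mul (μ := volume.restrict (Set.Ioi (0:ℝ)))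
      (ν := volume.restrict (Set.Ioi (0:ℝ)))
      (f := fun x : ℝ => (((n - i : ℕ) : ℝ) * ((n - j : ℕ) : ℝ)) *
          ((MP α (n - i - 1)).eval x * (MP α (n - j - 1)).eval x * (x ^ α * Real.exp (-x))))
      (g := fun y : ℝ => (QP β i).eval y * (QP β j).eval y * (y ^ β * Real.exp (-y)))
  have k2 := integral_prod_mul (μ := volume.restrict (Set.Ioi (0:ℝ)))
      (ν := volume.restrict (Set.Ioi (0:ℝ)))
      (f := fun x : ℝ => (QP α (n - i)).eval x * (QP α (n - j)).eval x * (x ^ α * Real.exp (-x)))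
      (g := fun y : ℝ => (((i : ℝ)) * ((j : ℝ))) *
          ((MP β (i - 1)).eval y * (MP β (j - 1)).eval y * (y ^ β * Real.exp (-y))))
  rw [integral_add hI1 hI2, k1, k2]
  rw [integral_const_mul, integral_const_mul, MP_ortho hα, MP_ortho hβ, QQ_ortho hβ, QQ_ortho hα]
  by_cases hij : i = j
  · subst hij
    rw [if_pos rfl]
    have OVd : ∀ (γ : ℝ) (m : ℕ), OV γ m m
        = (m.factorial : ℝ) * (ascPochhammer ℝ m).eval (γ + 1) * Real.Gamma (γ + 1) :=
      fun γ m => by rw [OV, if_pos rfl]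
    have hc : ((n - i : ℕ) : ℝ) = (n : ℝ) - i := Nat.cast_sub hi
    rcases Nat.eq_zero_or_pos i with rfl | hi1
    · simp only [Nat.cast_zero, zero_mul, mul_zero, add_zero, Nat.sub_zero, OVd, hkn]
      simp only [Nat.sub_zero, ascPochhammer_zero, Polynomial.eval_one, Nat.factorial_zero,
        Nat.cast_one, mul_one, one_mul, sub_zero, zero_add]
      field_simp
      ring
    · have z1 : OV β i (i - 1) = 0 := by rw [OV, if_neg (by omega)]
      have z2 : OV β (i - 1) i = 0 := by rw [OV, if_neg (by omega)]
      rcases Nat.eq_zero_or_pos (n - i) with hni | hni1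
      · have hin : i = n := by omega
        have hr : (n : ℝ) - i = 0 := by rw [hin]; ring
        have e2 : n - i - 1 = 0 := by omega
        have e3 : n - 1 - (i - 1) = 0 := by omega
        simp only [hni, e2, z1, z2, OVd, hkn, e3, hr, mul_zero, zero_mul, add_zero, zero_add,
          Nat.cast_zero]
        simp only [ascPochhammer_zero, Polynomial.eval_one, Nat.factorial_zero, Nat.cast_one,
          mul_one, one_mul, ne_eq, zero_pow, OfNat.ofNat_ne_zero, not_false_eq_true, zero_mul,
          mul_zero, add_zero, zero_add]
        field_simp
      · have e1 : n - 1 - i = n - i - 1 := by omega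
        have e2 : n - 1 - (i - 1) = n - i := by omega
        have e3 : n - 2 - (i - 1) = n - i - 1 := by omega
        have z3 : OV α (n - i) (n - i - 1) = 0 := by rw [OV, if_neg (by omega)]
        have z4 : OV α (n - i - 1) (n - i) = 0 := by rw [OV, if_neg (by omega)]
        simp only [z1, z2, z3, z4, OVd, hkn, e1, e2, e3, mul_zero, zero_mul, add_zero,
          zero_add, hc]
        field_simp
        ring
  · rw [if_neg hij]
    have t1 : ((n - i : ℕ) : ℝ) * ((n - j : ℕ) : ℝ) * OV α (n - i - 1) (n - j - 1) = 0 := by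
      by_cases hin : i = n
      · subst hin; simp [Nat.sub_self]
      · by_cases hjn : j = n
        · subst hjn; simp [Nat.sub_self]
        · rw [OV, if_neg (by omega), mul_zero]
    have t2 : (i : ℝ) * (j : ℝ) * OV β (i - 1) (j - 1) = 0 := by
      rcases Nat.eq_zero_or_pos i with rfl | h1
      · simp
      rcases Nat.eq_zero_or_pos j with rfl | h2
      · simp
      rw [OV, if_neg (by omega), mul_zero]
    linear_combination
      (1 / (Real.Gamma (α + 1) * Real.Gamma (β + 1)))
          * (OV β i j + (j : ℝ) * OV β i (j - 1) + (i : ℝ) * OV β (i - 1) j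
              + (i : ℝ) * (j : ℝ) * OV β (i - 1) (j - 1)) * t1
        + (1 / (Real.Gamma (α + 1) * Real.Gamma (β + 1)))
          * (OV α (n - i) (n - j) + ((n - j : ℕ) : ℝ) * OV α (n - i) (n - j - 1)
              + ((n - i : ℕ) : ℝ) * OV α (n - i - 1) (n - j)
              + ((n - i : ℕ) : ℝ) * ((n - j : ℕ) : ℝ) * OV α (n - i - 1) (n - j - 1)) * t2
end

section
/- For the product Laguerre weight, the cross Gram matrix C_n := ⟨𝕼_{n+1}, 𝕼_n^T⟩_∇ is bidiagonal with zero first and last rows: its nonzero entries are (C_n)_{i,i} = i²(n-i+1) h_{i-1}^{n-1} for 1 ≤ i ≤ n and (C_n)_{i+1,i} = (i+1)(n-i)² h_i^{n-1} for 0 ≤ i ≤ n-1, where h_k^m = (m-k)! k! (α+1)_{m-k} (β+1)_k. -/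
open Finset MeasureTheory

namespace LagAux
open Polynomial

noncomputable def lc (α : ℝ) (n k : ℕ) : ℝ :=
  (-1) ^ k * (Real.Gamma ((n : ℝ) + α + 1) /
      (Real.Gamma ((k : ℝ) + α + 1) * (n - k).factorial)) / k.factorial

noncomputable def LPol (α : ℝ) (n : ℕ) : ℝ[X] :=
  ∑ k ∈ Finset.range (n + 1), C (lc α n k) * X ^ k

lemma laguerre_eval (α : ℝ) (n : ℕ) (x : ℝ) : laguerre α n x = (LPol α n).eval x := by
  simp only [laguerre, LPol, eval_finset_sum, eval_mul, eval_C, eval_pow, eval_X, lc]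
  refine Finset.sum_congr rfl fun k _ => by ring

noncomputable def PPol (α : ℝ) (n : ℕ) : ℝ[X] := C ((-1 : ℝ) ^ n * (n.factorial : ℝ)) * LPol α n

noncomputable def QPol (α : ℝ) (n : ℕ) : ℝ[X] := PPol α n + C (n : ℝ) * PPol α (n - 1)

lemma lagMonic_eval (α : ℝ) (n : ℕ) (x : ℝ) : lagMonic α n x = (PPol α n).eval x := by
  simp [lagMonic, PPol, laguerre_eval]

lemma lagQ_eval (α : ℝ) (n : ℕ) (x : ℝ) : lagQ α n x = (QPol α n).eval x := by
  simp [lagQ, QPol, lagMonic_eval]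

lemma coeff_LPol (α : ℝ) (n k : ℕ) :
    (LPol α n).coeff k = if k ≤ n then lc α n k else 0 := by
  simp only [LPol, finset_sum_coeff, coeff_C_mul, coeff_X_pow]
  rw [Finset.sum_congr rfl (fun j _ => by rw [mul_ite, mul_one, mul_zero])]
  rw [Finset.sum_ite_eq (Finset.range (n+1)) k (fun j => lc α n j)]
  simp [Nat.lt_succ_iff]

lemma natDegree_LPol_le (α : ℝ) (n : ℕ) : (LPol α n).natDegree ≤ n := by
  rw [Polynomial.natDegree_le_iff_coeff_eq_zero]
  intro N hN
  rw [coeff_LPol, if_neg (by omega)]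

lemma coeff_PPol (α : ℝ) (n k : ℕ) :
    (PPol α n).coeff k = if k ≤ n then (-1) ^ n * n.factorial * lc α n k else 0 := by
  rw [PPol, coeff_C_mul, coeff_LPol, mul_ite, mul_zero]

lemma natDegree_PPol_le (α : ℝ) (n : ℕ) : (PPol α n).natDegree ≤ n := by
  rw [Polynomial.natDegree_le_iff_coeff_eq_zero]
  intro N hN
  rw [coeff_PPol, if_neg (by omega)]

lemma natDegree_QPol_le (α : ℝ) (n : ℕ) : (QPol α n).natDegree ≤ n := by
  rw [Polynomial.natDegree_le_iff_coeff_eq_zero]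
  intro N hN
  simp [QPol, coeff_PPol, if_neg (show ¬ N ≤ n by omega), if_neg (show ¬ N ≤ n - 1 by omega)]

lemma gamma_arg_pos (α : ℝ) (hα : -1 < α) (k : ℕ) : 0 < (k : ℝ) + α + 1 := by
  have : (0:ℝ) ≤ k := Nat.cast_nonneg k
  linarith

lemma coeff_PPol_self (α : ℝ) (hα : -1 < α) (n : ℕ) : (PPol α n).coeff n = 1 := by
  have h := Real.Gamma_pos_of_pos (gamma_arg_pos α hα n)
  rw [coeff_PPol, if_pos le_rfl]
  simp only [lc, Nat.sub_self, Nat.factorial_zero, Nat.cast_one, mul_one]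
  rw [div_self h.ne']
  rw [show ((-1:ℝ)^n * ↑n.factorial * ((-1)^n * 1 / ↑n.factorial)) = ((-1)^n)^2 * (↑n.factorial / ↑n.factorial) by ring]
  rw [show (((-1:ℝ)^n)^2) = 1 by rw [← pow_mul, pow_mul']; simp, div_self (by positivity : (n.factorial:ℝ) ≠ 0), one_mul]


lemma monic_lc (α : ℝ) (hα : -1 < α) (r : ℕ) :
    (-1 : ℝ) ^ r * (r.factorial : ℝ) * lc α r r = 1 := by
  have := coeff_PPol_self α hα r
  rwa [coeff_PPol, if_pos le_rfl] at this

lemma derivative_QPol (α : ℝ) (hα : -1 < α) (n : ℕ) :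
    derivative (QPol α n) = C (n : ℝ) * PPol α (n - 1) := by
  ext k
  rw [coeff_derivative, coeff_C_mul]
  cases n with
  | zero => simp [QPol, coeff_PPol]
  | succ m =>
      rw [show m + 1 - 1 = m from rfl]
      simp only [QPol, coeff_add, coeff_C_mul, coeff_PPol, Nat.add_sub_cancel]
      rcases lt_trichotomy k m with hkm | heq | hkm
      · rw [if_pos (by omega : k + 1 ≤ m + 1), if_pos (by omega : k + 1 ≤ m),
          if_pos (by omega : k ≤ m)]
        simp only [lc]
        have hG1 : (0:ℝ) < Real.Gamma ((k:ℝ) + α + 1) := Real.Gamma_pos_of_pos (gamma_arg_pos α hα k)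
        have hGm : (0:ℝ) < Real.Gamma ((m:ℝ) + α + 1) := Real.Gamma_pos_of_pos (gamma_arg_pos α hα m)
        have hG2 : Real.Gamma ((↑(k+1):ℝ) + α + 1) = ((k:ℝ) + α + 1) * Real.Gamma ((k:ℝ) + α + 1) := by
          rw [show ((↑(k+1):ℝ) + α + 1) = ((k:ℝ) + α + 1) + 1 by push_cast; ring]
          exact Real.Gamma_add_one (gamma_arg_pos α hα k).ne'
        have hG3 : Real.Gamma ((↑(m+1):ℝ) + α + 1) = ((m:ℝ) + α + 1) * Real.Gamma ((m:ℝ) + α + 1) := by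
          rw [show ((↑(m+1):ℝ) + α + 1) = ((m:ℝ) + α + 1) + 1 by push_cast; ring]
          exact Real.Gamma_add_one (gamma_arg_pos α hα m).ne'
        have hfac : ((m - k).factorial : ℝ) = ((m : ℝ) - k) * ((m - k - 1).factorial : ℝ) := by
          rw [show m - k = (m - k - 1) + 1 by omega, Nat.factorial_succ]
          push_cast [show m - k - 1 + 1 = m - k by omega, Nat.cast_sub hkm.le]
          ring
        have e1 : m + 1 - (k + 1) = m - k := by omega
        have e2 : m - (k + 1) = m - k - 1 := by omega
        rw [e1, e2, hG2, hG3, hfac]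
        have hx : ((k:ℝ) + α + 1) ≠ 0 := (gamma_arg_pos α hα k).ne'
        have hmk : ((m:ℝ) - k) ≠ 0 := by
          have : (k:ℝ) < m := by exact_mod_cast hkm
          linarith
        have hf1 : ((m - k - 1).factorial : ℝ) ≠ 0 := by positivity
        have hf2 : ((k+1).factorial : ℝ) ≠ 0 := by positivity
        have hf3 : ((k).factorial : ℝ) ≠ 0 := by positivity
        have hfk1 : ((k+1).factorial : ℝ) = ((k:ℝ)+1) * (k.factorial : ℝ) := by
          rw [Nat.factorial_succ]; push_cast; ring
        have hfm1 : ((m+1).factorial : ℝ) = ((m:ℝ)+1) * (m.factorial : ℝ) := by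
          rw [Nat.factorial_succ]; push_cast; ring
        have hs1 : ((-1:ℝ)) ^ (m+1) = -(-1:ℝ)^m := by rw [pow_succ]; ring
        have hs2 : ((-1:ℝ)) ^ (k+1) = -(-1:ℝ)^k := by rw [pow_succ]; ring
        rw [hfk1, hfm1, hs1, hs2]
        push_cast
        field_simp
        ring
      · subst heq
        rw [if_pos le_rfl, if_neg (by omega : ¬ (k + 1 ≤ k)), if_pos le_rfl]
        have h1 := monic_lc α hα (k+1)
        have h2 := monic_lc α hα k
        push_cast at h1 h2 ⊢
        nlinarith [h1, h2]
      · rw [if_neg (by omega : ¬ (k + 1 ≤ m + 1)), if_neg (by omega : ¬ (k + 1 ≤ m)),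
          if_neg (by omega : ¬ (k ≤ m))]
        ring

noncomputable def w (α x : ℝ) : ℝ := x ^ α * Real.exp (-x)

lemma rpow_w (α x : ℝ) : Real.rpow x α * Real.exp (-x) = w α x := rfl

lemma integrableOn_pow_mul_w (α : ℝ) (hα : -1 < α) (k : ℕ) :
    IntegrableOn (fun x => x ^ k * w α x) (Set.Ioi (0:ℝ)) := by
  have h : (0:ℝ) < α + k + 1 := by
    have : (0:ℝ) ≤ k := Nat.cast_nonneg k
    linarith
  refine (Real.GammaIntegral_convergent h).congr_fun (fun x hx => ?_) measurableSet_Ioi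
  have hx0 : (0:ℝ) < x := hx
  rw [w, show (α + (k:ℝ) + 1 - 1) = α + k by ring]
  beta_reduce
  rw [Real.rpow_add hx0, Real.rpow_natCast]
  ring

lemma moment (α : ℝ) (hα : -1 < α) (k : ℕ) :
    ∫ x in Set.Ioi (0:ℝ), x ^ k * w α x = Real.Gamma (α + k + 1) := by
  have h : (0:ℝ) < α + k + 1 := by
    have : (0:ℝ) ≤ k := Nat.cast_nonneg k
    linarith
  rw [Real.Gamma_eq_integral h]
  refine MeasureTheory.setIntegral_congr_fun measurableSet_Ioi (fun x hx => ?_)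
  have hx0 : (0:ℝ) < x := hx
  rw [w, show (α + (k:ℝ) + 1 - 1) = α + k by ring, Real.rpow_add hx0, Real.rpow_natCast]
  ring

lemma integrableOn_poly_mul_w (α : ℝ) (hα : -1 < α) (P : ℝ[X]) :
    IntegrableOn (fun x => P.eval x * w α x) (Set.Ioi (0:ℝ)) := by
  induction P using Polynomial.induction_on' with
  | add p q hp hq =>
      refine MeasureTheory.IntegrableOn.congr_fun (hp.add hq) (fun x _ => ?_) measurableSet_Ioi
      simp only [Pi.add_apply, eval_add]; ring
  | monomial d a =>
      have := (integrableOn_pow_mul_w α hα d).const_mul a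
      refine MeasureTheory.IntegrableOn.congr_fun this (fun x _ => ?_) measurableSet_Ioi
      simp only [eval_monomial]; ring

lemma integral_poly_mul_w (α : ℝ) (hα : -1 < α) (P : ℝ[X]) {N : ℕ} (hN : P.natDegree < N) :
    ∫ x in Set.Ioi (0:ℝ), P.eval x * w α x
      = ∑ k ∈ Finset.range N, P.coeff k * Real.Gamma (α + k + 1) := by
  have step : ∀ x ∈ Set.Ioi (0:ℝ), P.eval x * w α x
      = ∑ k ∈ Finset.range N, P.coeff k * (x ^ k * w α x) := by
    intro x _
    rw [Polynomial.eval_eq_sum_range' hN, Finset.sum_mul]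
    exact Finset.sum_congr rfl fun k _ => by ring
  rw [MeasureTheory.setIntegral_congr_fun measurableSet_Ioi step,
    MeasureTheory.integral_finset_sum]
  · exact Finset.sum_congr rfl fun k _ => by
      rw [MeasureTheory.integral_const_mul, moment α hα k]
  · exact fun k _ => ((integrableOn_pow_mul_w α hα k).const_mul _)

lemma coeff_comp_X_add_one (Q : ℝ[X]) {N : ℕ} (hN : Q.natDegree < N) (k : ℕ) :
    (Q.comp (X + 1)).coeff k = ∑ i ∈ Finset.range N, Q.coeff i * (i.choose k : ℝ) := by
  rw [comp_eq_sum_left, Polynomial.sum_over_range' Q (fun n => by simp) N hN, finset_sum_coeff]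
  exact Finset.sum_congr rfl fun i _ => by rw [coeff_C_mul, coeff_X_add_one_pow]

lemma findiff (m : ℕ) : ∀ (Q : ℝ[X]), Q.natDegree ≤ m →
    ∑ j ∈ Finset.range (m+1), (-1:ℝ)^j * (m.choose j : ℝ) * Q.eval (j : ℝ)
      = (-1)^m * (m.factorial : ℝ) * Q.coeff m := by
  induction m with
  | zero =>
      intro Q hQ
      rw [Polynomial.eq_C_of_natDegree_le_zero hQ]
      simp
  | succ m ih =>
      intro Q hQ
      set Q' : ℝ[X] := Q - Q.comp (X + 1) with hQ'def
      have hcomp : ∀ k, (Q.comp (X+1)).coeff k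
          = ∑ i ∈ Finset.range (m+2), Q.coeff i * (i.choose k : ℝ) :=
        fun k => coeff_comp_X_add_one Q (lt_of_le_of_lt hQ (lt_add_one _)) k
      have hQtop : ∀ N, m + 1 < N → Q.coeff N = 0 :=
        fun N hN => Polynomial.natDegree_le_iff_coeff_eq_zero.mp hQ N hN
    -- coefficient m+1 of comp equals Q.coeff (m+1)
      have hc1 : (Q.comp (X+1)).coeff (m+1) = Q.coeff (m+1) := by
        rw [hcomp, Finset.sum_eq_single (m+1)]
        · simp
        · intro i hi hne
          have hi' : i < m + 2 := Finset.mem_range.mp hi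
          have : i < m + 1 := by omega
          rw [Nat.choose_eq_zero_of_lt this, Nat.cast_zero, mul_zero]
        · intro h; exact absurd (Finset.self_mem_range_succ (m+1)) h
      have hdeg : Q'.natDegree ≤ m := by
        rw [Polynomial.natDegree_le_iff_coeff_eq_zero]
        intro N hN
        rw [hQ'def, coeff_sub]
        rcases Nat.lt_or_ge (m+1) N with h | h
        · rw [hQtop N h, hcomp, Finset.sum_eq_zero, sub_zero]
          intro i hi
          have : i < N := by have := Finset.mem_range.mp hi; omega
          rw [Nat.choose_eq_zero_of_lt this, Nat.cast_zero, mul_zero]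
        · have hNm : N = m + 1 := by omega
          rw [hNm, hc1, sub_self]
      have hcm : Q'.coeff m = -((m:ℝ)+1) * Q.coeff (m+1) := by
        rw [hQ'def, coeff_sub, hcomp]
        rw [show m + 2 = (m+1)+1 from rfl, Finset.sum_range_succ, Finset.sum_range_succ]
        rw [Finset.sum_eq_zero (fun i hi => by
          rw [Nat.choose_eq_zero_of_lt (Finset.mem_range.mp hi), Nat.cast_zero, mul_zero])]
        rw [Nat.choose_self, Nat.choose_succ_self_right]
        push_cast
        ring
      -- sum manipulation
      have hU : ∑ j ∈ Finset.range (m+2), (-1:ℝ)^j * (m.choose j : ℝ) * Q.eval (j:ℝ)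
          = ∑ j ∈ Finset.range (m+1), (-1:ℝ)^j * (m.choose j : ℝ) * Q.eval (j:ℝ) := by
        rw [Finset.sum_range_succ, Nat.choose_eq_zero_of_lt (lt_add_one m)]
        simp
      have hT : ∑ j ∈ Finset.range (m+2), (-1:ℝ)^j * ((m+1).choose j : ℝ) * Q.eval (j:ℝ)
          = ∑ j ∈ Finset.range (m+1), (-1:ℝ)^j * (m.choose j : ℝ)
              * (Q.eval (j:ℝ) - Q.eval ((j:ℝ)+1)) := by
        rw [Finset.sum_range_succ' (fun j => (-1:ℝ)^j * ((m+1).choose j : ℝ) * Q.eval (j:ℝ))]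
        rw [Finset.sum_range_succ' (fun j => (-1:ℝ)^j * (m.choose j : ℝ) * Q.eval (j:ℝ))] at hU
        have expand : ∀ j, (-1:ℝ)^(j+1) * ((m+1).choose (j+1) : ℝ) * Q.eval ((j+1:ℕ):ℝ)
            = -((-1:ℝ)^j * (m.choose j : ℝ) * Q.eval ((j:ℝ)+1))
              + (-1:ℝ)^(j+1) * (m.choose (j+1) : ℝ) * Q.eval ((j+1:ℕ):ℝ) := by
          intro j
          rw [Nat.choose_succ_succ]
          push_cast
          ring
        rw [Finset.sum_congr rfl (fun j _ => expand j), Finset.sum_add_distrib]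
        have : ∑ j ∈ Finset.range (m+1), (-1:ℝ)^(j+1) * (m.choose (j+1) : ℝ) * Q.eval ((j+1:ℕ):ℝ)
            + ((-1:ℝ)^0 * ((m+1).choose 0 : ℝ) * Q.eval ((0:ℕ):ℝ))
            = ∑ j ∈ Finset.range (m+1), (-1:ℝ)^j * (m.choose j : ℝ) * Q.eval (j:ℝ) := by
          rw [← hU]
          simp
        rw [add_assoc, this, ← Finset.sum_add_distrib]
        exact Finset.sum_congr rfl fun j _ => by ring
      have hQ'eval : ∀ j : ℕ, Q'.eval (j:ℝ) = Q.eval (j:ℝ) - Q.eval ((j:ℝ)+1) := by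
        intro j
        rw [hQ'def, eval_sub, eval_comp]
        simp
      calc ∑ j ∈ Finset.range (m+1+1), (-1:ℝ)^j * ((m+1).choose j : ℝ) * Q.eval (j:ℝ)
          = ∑ j ∈ Finset.range (m+1), (-1:ℝ)^j * (m.choose j : ℝ) * Q'.eval (j:ℝ) := by
            rw [hT]; exact Finset.sum_congr rfl fun j _ => by rw [hQ'eval]
        _ = (-1)^m * (m.factorial : ℝ) * Q'.coeff m := ih Q' hdeg
        _ = (-1)^(m+1) * ((m+1).factorial : ℝ) * Q.coeff (m+1) := by
            rw [hcm, Nat.factorial_succ]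
            push_cast
            ring

lemma Gamma_add_nat (x : ℝ) (hx : 0 < x) (k : ℕ) :
    Real.Gamma (x + k) = Real.Gamma x * (ascPochhammer ℝ k).eval x := by
  induction k with
  | zero => simp
  | succ k ih =>
      rw [show x + ((k+1 : ℕ):ℝ) = (x + k) + 1 by push_cast; ring,
        Real.Gamma_add_one (by positivity : x + (k:ℝ) ≠ 0), ih, ascPochhammer_succ_eval]
      ring

lemma w_shift (α : ℝ) (k : ℕ) {x : ℝ} (hx : 0 < x) : x ^ k * w α x = w (α + k) x := by
  rw [w, w, Real.rpow_add hx, Real.rpow_natCast]; ring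

lemma integral_LPol_mul_w_shift (α : ℝ) (hα : -1 < α) {m k : ℕ} (hk : k ≤ m) :
    ∫ x in Set.Ioi (0:ℝ), (LPol α m).eval x * (x ^ k * w α x)
      = if k = m then (-1:ℝ)^m * Real.Gamma (α + m + 1) else 0 := by
  have hα' : -1 < α + k := by
    have : (0:ℝ) ≤ k := Nat.cast_nonneg k
    linarith
  have h1 : ∫ x in Set.Ioi (0:ℝ), (LPol α m).eval x * (x ^ k * w α x)
      = ∫ x in Set.Ioi (0:ℝ), (LPol α m).eval x * w (α + k) x := by
    refine MeasureTheory.setIntegral_congr_fun measurableSet_Ioi (fun x hx => ?_)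
    rw [w_shift α k hx]
  rw [h1, integral_poly_mul_w (α + k) hα' _ (Nat.lt_succ_of_le (natDegree_LPol_le α m))]
  set Qk : ℝ[X] := (ascPochhammer ℝ k).comp (X + C (α + 1)) with hQk
  have hdegQk : Qk.natDegree ≤ k := by
    refine le_trans (Polynomial.natDegree_comp_le) ?_
    rw [ascPochhammer_natDegree, natDegree_X_add_C, mul_one]
  have hterm : ∀ j, j ≤ m → (LPol α m).coeff j * Real.Gamma (α + k + j + 1)
      = Real.Gamma ((m:ℝ) + α + 1) / (m.factorial : ℝ)
        * ((-1:ℝ)^j * (m.choose j : ℝ) * Qk.eval (j:ℝ)) := by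
    intro j hj
    have hGj : (0:ℝ) < Real.Gamma ((j:ℝ) + α + 1) :=
      Real.Gamma_pos_of_pos (gamma_arg_pos α hα j)
    have hGshift : Real.Gamma (α + k + j + 1)
        = Real.Gamma ((j:ℝ) + α + 1) * (ascPochhammer ℝ k).eval ((j:ℝ) + α + 1) := by
      rw [show α + (k:ℝ) + j + 1 = ((j:ℝ) + α + 1) + k by ring]
      exact Gamma_add_nat _ (gamma_arg_pos α hα j) k
    have hQkeval : Qk.eval (j:ℝ) = (ascPochhammer ℝ k).eval ((j:ℝ) + α + 1) := by
      rw [hQk, eval_comp, eval_add, eval_X, eval_C]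
      ring_nf
    have hchoose : (m.choose j : ℝ)
        = (m.factorial : ℝ) / ((j.factorial : ℝ) * ((m - j).factorial : ℝ)) :=
      Nat.cast_choose ℝ hj
    rw [coeff_LPol, if_pos hj, lc, hGshift, hQkeval, hchoose]
    have h1 : ((j.factorial : ℝ)) ≠ 0 := by positivity
    have h2 : (((m-j).factorial : ℝ)) ≠ 0 := by positivity
    have h3 : ((m.factorial : ℝ)) ≠ 0 := by positivity
    field_simp
  rw [Finset.sum_congr rfl (fun j hj => hterm j (Nat.lt_succ_iff.mp (Finset.mem_range.mp hj)))]
  rw [← Finset.mul_sum, findiff m Qk (le_trans hdegQk hk)]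
  have hGm : ((m.factorial : ℝ)) ≠ 0 := by positivity
  rcases eq_or_lt_of_le hk with heq | hlt
  · subst heq
    have hdeg : Qk.natDegree = k := by
      rw [hQk, Polynomial.natDegree_comp, ascPochhammer_natDegree, natDegree_X_add_C, mul_one]
    have hcoeff : Qk.coeff k = 1 := by
      have hlead : Qk.leadingCoeff = 1 := by
        rw [hQk, Polynomial.leadingCoeff_comp (by rw [natDegree_X_add_C]; exact one_ne_zero)]
        rw [(monic_ascPochhammer ℝ k).leadingCoeff, (monic_X_add_C (α+1)).leadingCoeff]
        simp
      rw [← hdeg, ← Polynomial.leadingCoeff, hlead]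
    rw [if_pos rfl, hcoeff, show (k:ℝ) + α + 1 = α + k + 1 by ring]
    field_simp
  · have hcoeff : Qk.coeff m = 0 :=
      Polynomial.coeff_eq_zero_of_natDegree_lt (lt_of_le_of_lt hdegQk hlt)
    rw [if_neg (by omega), hcoeff]
    ring

lemma integrableOn_poly2 (α : ℝ) (hα : -1 < α) (P Q : ℝ[X]) :
    IntegrableOn (fun x => P.eval x * (Q.eval x * w α x)) (Set.Ioi (0:ℝ)) := by
  refine MeasureTheory.IntegrableOn.congr_fun (integrableOn_poly_mul_w α hα (P * Q))
    (fun x _ => ?_) measurableSet_Ioi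
  rw [eval_mul]; ring

lemma integral_pow_mul_PPol (α : ℝ) (hα : -1 < α) {k b : ℕ} (hk : k ≤ b) :
    ∫ x in Set.Ioi (0:ℝ), x ^ k * ((PPol α b).eval x * w α x)
      = if k = b then (b.factorial : ℝ) * Real.Gamma (α + b + 1) else 0 := by
  have hstep : ∀ x ∈ Set.Ioi (0:ℝ), x ^ k * ((PPol α b).eval x * w α x)
      = ((-1:ℝ)^b * (b.factorial : ℝ)) * ((LPol α b).eval x * (x ^ k * w α x)) := by
    intro x _
    rw [PPol, eval_mul, eval_C]
    ring
  rw [MeasureTheory.setIntegral_congr_fun measurableSet_Ioi hstep,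
    MeasureTheory.integral_const_mul, integral_LPol_mul_w_shift α hα hk]
  rcases eq_or_ne k b with heq | hne
  · rw [if_pos heq, if_pos heq]
    rw [show ((-1:ℝ)^b * (b.factorial:ℝ)) * ((-1:ℝ)^b * Real.Gamma (α + b + 1))
        = ((-1:ℝ)^b)^2 * ((b.factorial:ℝ) * Real.Gamma (α + b + 1)) by ring]
    rw [show (((-1:ℝ)^b)^2) = 1 by rw [← pow_mul, pow_mul']; simp, one_mul]
  · rw [if_neg hne, if_neg hne, mul_zero]

lemma integral_poly_mul_PPol (α : ℝ) (hα : -1 < α) (P : ℝ[X]) {b : ℕ} (hP : P.natDegree ≤ b) :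
    ∫ x in Set.Ioi (0:ℝ), P.eval x * ((PPol α b).eval x * w α x)
      = P.coeff b * ((b.factorial : ℝ) * Real.Gamma (α + b + 1)) := by
  have hstep : ∀ x ∈ Set.Ioi (0:ℝ), P.eval x * ((PPol α b).eval x * w α x)
      = ∑ k ∈ Finset.range (b+1), P.coeff k * (x ^ k * ((PPol α b).eval x * w α x)) := by
    intro x _
    rw [Polynomial.eval_eq_sum_range' (Nat.lt_succ_of_le hP), Finset.sum_mul]
    exact Finset.sum_congr rfl fun k _ => by ring
  rw [MeasureTheory.setIntegral_congr_fun measurableSet_Ioi hstep,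
    MeasureTheory.integral_finset_sum]
  · rw [Finset.sum_congr rfl (fun k hk => by
      rw [MeasureTheory.integral_const_mul,
        integral_pow_mul_PPol α hα (Nat.lt_succ_iff.mp (Finset.mem_range.mp hk))])]
    rw [Finset.sum_eq_single b]
    · rw [if_pos rfl]
    · intro k _ hne; rw [if_neg hne, mul_zero]
    · intro h; exact absurd (Finset.self_mem_range_succ b) h
  · intro k _
    have := (integrableOn_poly2 α hα (X^k) (PPol α b)).const_mul (P.coeff k)
    refine MeasureTheory.IntegrableOn.congr_fun this (fun x _ => ?_) measurableSet_Ioi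
    simp only [eval_pow, eval_X]

lemma integral_PPol_mul_PPol (α : ℝ) (hα : -1 < α) (a b : ℕ) :
    ∫ x in Set.Ioi (0:ℝ), (PPol α a).eval x * ((PPol α b).eval x * w α x)
      = if a = b then (a.factorial : ℝ) * Real.Gamma (α + a + 1) else 0 := by
  rcases le_total a b with hab | hba
  · rw [integral_poly_mul_PPol α hα _ (le_trans (natDegree_PPol_le α a) hab), coeff_PPol]
    rcases eq_or_ne a b with heq | hne
    · subst heq
      rw [if_pos rfl, if_pos le_rfl]
      have := monic_lc α hα a
      rw [show (-1:ℝ)^a * (a.factorial:ℝ) * lc α a a = 1 from this, one_mul]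
    · rw [if_neg hne, if_neg (by omega : ¬ b ≤ a), zero_mul]
  · have hcomm : ∀ x ∈ Set.Ioi (0:ℝ), (PPol α a).eval x * ((PPol α b).eval x * w α x)
        = (PPol α b).eval x * ((PPol α a).eval x * w α x) := fun x _ => by ring
    rw [MeasureTheory.setIntegral_congr_fun measurableSet_Ioi hcomm,
      integral_poly_mul_PPol α hα _ (le_trans (natDegree_PPol_le α b) hba), coeff_PPol]
    rcases eq_or_ne a b with heq | hne
    · subst heq
      rw [if_pos rfl, if_pos le_rfl]
      have := monic_lc α hα a
      rw [show (-1:ℝ)^a * (a.factorial:ℝ) * lc α a a = 1 from this, one_mul]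
    · rw [if_neg hne, if_neg (by omega : ¬ a ≤ b), zero_mul]

lemma integral_QPol_succ_mul_QPol (α : ℝ) (hα : -1 < α) (m : ℕ) :
    ∫ x in Set.Ioi (0:ℝ), (QPol α (m+1)).eval x * ((QPol α m).eval x * w α x)
      = ((m+1).factorial : ℝ) * Real.Gamma (α + m + 1) := by
  have i1 := integrableOn_poly2 α hα (PPol α (m+1)) (PPol α m)
  have i2 := (integrableOn_poly2 α hα (PPol α (m+1)) (PPol α (m-1))).const_mul (m:ℝ)
  have i3 := (integrableOn_poly2 α hα (PPol α m) (PPol α m)).const_mul ((m:ℝ)+1)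
  have i4 := (integrableOn_poly2 α hα (PPol α m) (PPol α (m-1))).const_mul (((m:ℝ)+1) * m)
  have hexp : ∀ x ∈ Set.Ioi (0:ℝ), (QPol α (m+1)).eval x * ((QPol α m).eval x * w α x)
      = ((PPol α (m+1)).eval x * ((PPol α m).eval x * w α x)
          + (m:ℝ) * ((PPol α (m+1)).eval x * ((PPol α (m-1)).eval x * w α x)))
        + (((m:ℝ)+1) * ((PPol α m).eval x * ((PPol α m).eval x * w α x))
          + (((m:ℝ)+1) * (m:ℝ)) * ((PPol α m).eval x * ((PPol α (m-1)).eval x * w α x))) := by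
    intro x _
    simp only [QPol, Nat.add_sub_cancel, eval_add, eval_mul, eval_C]
    push_cast
    ring
  have i12 : Integrable (fun x => (PPol α (m+1)).eval x * ((PPol α m).eval x * w α x)
      + (m:ℝ) * ((PPol α (m+1)).eval x * ((PPol α (m-1)).eval x * w α x)))
      (volume.restrict (Set.Ioi 0)) := i1.add i2
  have i34 : Integrable (fun x => ((m:ℝ)+1) * ((PPol α m).eval x * ((PPol α m).eval x * w α x))
      + (((m:ℝ)+1) * (m:ℝ)) * ((PPol α m).eval x * ((PPol α (m-1)).eval x * w α x)))
      (volume.restrict (Set.Ioi 0)) := i3.add i4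
  rw [MeasureTheory.setIntegral_congr_fun measurableSet_Ioi hexp,
    MeasureTheory.integral_add i12 i34,
    MeasureTheory.integral_add i1 i2, MeasureTheory.integral_add i3 i4,
    MeasureTheory.integral_const_mul, MeasureTheory.integral_const_mul,
    MeasureTheory.integral_const_mul,
    integral_PPol_mul_PPol α hα, integral_PPol_mul_PPol α hα,
    integral_PPol_mul_PPol α hα, integral_PPol_mul_PPol α hα]
  rw [if_neg (by omega : ¬ m + 1 = m), if_neg (by omega : ¬ m + 1 = m - 1),
    if_pos rfl]
  have hlast : (m:ℝ) * (if m = m - 1 then (m.factorial : ℝ) * Real.Gamma (α + m + 1) else 0)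
      = 0 := by
    rcases Nat.eq_zero_or_pos m with h0 | hpos
    · subst h0; simp
    · rw [if_neg (by omega), mul_zero]
  rw [show (((m:ℝ)+1) * (m:ℝ)) * (if m = m - 1 then (m.factorial : ℝ)
      * Real.Gamma (α + m + 1) else 0)
      = ((m:ℝ)+1) * ((m:ℝ) * (if m = m - 1 then (m.factorial : ℝ)
      * Real.Gamma (α + m + 1) else 0)) by ring, hlast, Nat.factorial_succ]
  push_cast
  ring

lemma integral_derivQ_mul_derivQ (α : ℝ) (hα : -1 < α) (a b : ℕ) :
    ∫ x in Set.Ioi (0:ℝ),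
        (derivative (QPol α a)).eval x * ((derivative (QPol α b)).eval x * w α x)
      = (a:ℝ) * (b:ℝ) * (if a - 1 = b - 1
          then (((a-1).factorial : ℝ)) * Real.Gamma (α + ((a-1 : ℕ) : ℝ) + 1) else 0) := by
  rw [derivative_QPol α hα a, derivative_QPol α hα b]
  have hstep : ∀ x ∈ Set.Ioi (0:ℝ),
      (C (a:ℝ) * PPol α (a-1)).eval x * ((C (b:ℝ) * PPol α (b-1)).eval x * w α x)
      = ((a:ℝ) * (b:ℝ)) * ((PPol α (a-1)).eval x * ((PPol α (b-1)).eval x * w α x)) := by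
    intro x _
    simp only [eval_mul, eval_C]
    ring
  rw [MeasureTheory.setIntegral_congr_fun measurableSet_Ioi hstep,
    MeasureTheory.integral_const_mul, integral_PPol_mul_PPol α hα]

end LagAux

namespace LagAux
open Polynomial

lemma deriv_lagQ2_left (γ δ : ℝ) (m k : ℕ) (x y : ℝ) :
    deriv (fun t => lagQ2 γ δ m k t y) x
      = (Polynomial.derivative (QPol γ (m - k))).eval x * (QPol δ k).eval y := by
  have h : (fun t => lagQ2 γ δ m k t y)
      = fun t => (QPol γ (m - k)).eval t * (QPol δ k).eval y := by
    funext t; rw [lagQ2, lagQ_eval, lagQ_eval]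
  rw [h, deriv_mul_const (Polynomial.differentiableAt _), Polynomial.deriv]

lemma deriv_lagQ2_right (γ δ : ℝ) (m k : ℕ) (x y : ℝ) :
    deriv (fun t => lagQ2 γ δ m k x t) y
      = (QPol γ (m - k)).eval x * (Polynomial.derivative (QPol δ k)).eval y := by
  have h : (fun t => lagQ2 γ δ m k x t)
      = fun t => (QPol γ (m - k)).eval x * (QPol δ k).eval t := by
    funext t; rw [lagQ2, lagQ_eval, lagQ_eval]
  rw [h, deriv_const_mul _ (Polynomial.differentiableAt _), Polynomial.deriv]

lemma lagGrad_key (α β : ℝ) (hα : -1 < α) (hβ : -1 < β) (n i l : ℕ) :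
    lagGrad α β (lagQ2 α β (n + 1) i) (lagQ2 α β n l)
      = (1 / (Real.Gamma (α + 1) * Real.Gamma (β + 1))) *
        ((∫ x in Set.Ioi (0:ℝ), (Polynomial.derivative (QPol α (n + 1 - i))).eval x *
            ((Polynomial.derivative (QPol α (n - l))).eval x * w α x)) *
          (∫ y in Set.Ioi (0:ℝ), (QPol β i).eval y * ((QPol β l).eval y * w β y))
        + (∫ x in Set.Ioi (0:ℝ), (QPol α (n + 1 - i)).eval x * ((QPol α (n - l)).eval x * w α x)) *
          (∫ y in Set.Ioi (0:ℝ), (Polynomial.derivative (QPol β i)).eval y *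
            ((Polynomial.derivative (QPol β l)).eval y * w β y))) := by
  rw [lagGrad]
  congr 1
  have hpt : ∀ p ∈ (Set.Ioi (0:ℝ)) ×ˢ (Set.Ioi (0:ℝ)),
      ((deriv (fun t => lagQ2 α β (n+1) i t p.2) p.1 * deriv (fun t => lagQ2 α β n l t p.2) p.1 +
        deriv (fun t => lagQ2 α β (n+1) i p.1 t) p.2 * deriv (fun t => lagQ2 α β n l p.1 t) p.2) *
        (Real.rpow p.1 α * Real.exp (-p.1) * (Real.rpow p.2 β * Real.exp (-p.2))))
      = ((Polynomial.derivative (QPol α (n+1-i))).eval p.1 *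
            ((Polynomial.derivative (QPol α (n-l))).eval p.1 * w α p.1)) *
          ((QPol β i).eval p.2 * ((QPol β l).eval p.2 * w β p.2))
        + ((QPol α (n+1-i)).eval p.1 * ((QPol α (n-l)).eval p.1 * w α p.1)) *
          ((Polynomial.derivative (QPol β i)).eval p.2 *
            ((Polynomial.derivative (QPol β l)).eval p.2 * w β p.2)) := by
    intro p _
    rw [deriv_lagQ2_left, deriv_lagQ2_left, deriv_lagQ2_right, deriv_lagQ2_right,
      rpow_w α p.1, rpow_w β p.2]
    ring
  rw [MeasureTheory.setIntegral_congr_fun (measurableSet_Ioi.prod measurableSet_Ioi) hpt]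
  rw [MeasureTheory.Measure.volume_eq_prod, ← MeasureTheory.Measure.prod_restrict]
  have i1 : Integrable (fun z : ℝ × ℝ =>
      ((Polynomial.derivative (QPol α (n+1-i))).eval z.1 *
        ((Polynomial.derivative (QPol α (n-l))).eval z.1 * w α z.1)) *
      ((QPol β i).eval z.2 * ((QPol β l).eval z.2 * w β z.2)))
      ((volume.restrict (Set.Ioi 0)).prod (volume.restrict (Set.Ioi 0))) :=
    MeasureTheory.Integrable.mul_prod (integrableOn_poly2 α hα _ _) (integrableOn_poly2 β hβ _ _)
  have i2 : Integrable (fun z : ℝ × ℝ =>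
      ((QPol α (n+1-i)).eval z.1 * ((QPol α (n-l)).eval z.1 * w α z.1)) *
      ((Polynomial.derivative (QPol β i)).eval z.2 *
        ((Polynomial.derivative (QPol β l)).eval z.2 * w β z.2)))
      ((volume.restrict (Set.Ioi 0)).prod (volume.restrict (Set.Ioi 0))) :=
    MeasureTheory.Integrable.mul_prod (integrableOn_poly2 α hα _ _) (integrableOn_poly2 β hβ _ _)
  rw [MeasureTheory.integral_add i1 i2,
    MeasureTheory.integral_prod_mul
      (fun x : ℝ => (Polynomial.derivative (QPol α (n+1-i))).eval x *
        ((Polynomial.derivative (QPol α (n-l))).eval x * w α x))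
      (fun y : ℝ => (QPol β i).eval y * ((QPol β l).eval y * w β y)),
    MeasureTheory.integral_prod_mul
      (fun x : ℝ => (QPol α (n+1-i)).eval x * ((QPol α (n-l)).eval x * w α x))
      (fun y : ℝ => (Polynomial.derivative (QPol β i)).eval y *
        ((Polynomial.derivative (QPol β l)).eval y * w β y))]

end LagAux

set_option maxHeartbeats 1000000 in
/-- The cross Gram matrix `C_n = ⟨𝕼_{n+1}, 𝕼_n^T⟩_∇` for the product Laguerre weight is
bidiagonal with zero first and last rows: its entries are
`(C_n)_{i,i} = i²(n-i+1) h_{i-1}^{n-1}` for `1 ≤ i ≤ n` and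
`(C_n)_{i+1,i} = (i+1)(n-i)² h_i^{n-1}` for `0 ≤ i ≤ n-1`, all other entries vanish. -/
theorem lagGrad_cross_gram (α β : ℝ) (hα : -1 < α) (hβ : -1 < β) (n : ℕ)
    (i l : ℕ) (hi : i ≤ n + 1) (hl : l ≤ n) :
    lagGrad α β (lagQ2 α β (n + 1) i) (lagQ2 α β n l)
      = (if i = l then (i : ℝ) ^ 2 * ((n : ℝ) - i + 1) * hkn α β (i - 1) (n - 1) else 0)
        + (if i = l + 1 then ((l : ℝ) + 1) * ((n : ℝ) - l) ^ 2 * hkn α β l (n - 1) else 0) := by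
  have hGa : (0:ℝ) < Real.Gamma (α + 1) := Real.Gamma_pos_of_pos (by linarith)
  have hGb : (0:ℝ) < Real.Gamma (β + 1) := Real.Gamma_pos_of_pos (by linarith)
  rw [LagAux.lagGrad_key α β hα hβ n i l,
    LagAux.integral_derivQ_mul_derivQ α hα (n + 1 - i) (n - l),
    LagAux.integral_derivQ_mul_derivQ β hβ i l]
  by_cases hil : i = l
  · rw [hil, if_pos rfl, if_neg (by omega : ¬ l = l + 1), add_zero]
    have hz1 : (↑(n + 1 - l) : ℝ) * ↑(n - l) *
        (if n + 1 - l - 1 = n - l - 1 then ((n + 1 - l - 1).factorial : ℝ)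
          * Real.Gamma (α + ((n + 1 - l - 1 : ℕ) : ℝ) + 1) else 0) = 0 := by
      by_cases hln : n ≤ l
      · rw [show n - l = 0 by omega]
        simp
      · rw [if_neg (by omega)]
        ring
    rw [hz1, zero_mul, zero_add, if_pos rfl]
    by_cases hl0 : l = 0
    · subst hl0
      simp
    · rw [show n + 1 - l = (n - l) + 1 by omega,
        LagAux.integral_QPol_succ_mul_QPol α hα (n - l), hkn,
        show n - 1 - (l - 1) = n - l by omega]
      have e1 : Real.Gamma (α + ((n - l : ℕ) : ℝ) + 1)
          = Real.Gamma (α + 1) * (ascPochhammer ℝ (n - l)).eval (α + 1) := by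
        rw [show α + ((n - l : ℕ) : ℝ) + 1 = (α + 1) + ((n - l : ℕ) : ℝ) by ring]
        exact LagAux.Gamma_add_nat _ (by linarith) _
      have e2 : Real.Gamma (β + ((l - 1 : ℕ) : ℝ) + 1)
          = Real.Gamma (β + 1) * (ascPochhammer ℝ (l - 1)).eval (β + 1) := by
        rw [show β + ((l - 1 : ℕ) : ℝ) + 1 = (β + 1) + ((l - 1 : ℕ) : ℝ) by ring]
        exact LagAux.Gamma_add_nat _ (by linarith) _
      have e3 : ((n - l + 1).factorial : ℝ) = (((n - l : ℕ) : ℝ) + 1) * ((n - l).factorial : ℝ) := by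
        rw [Nat.factorial_succ]; push_cast; ring
      have e4 : ((n : ℝ) - (l : ℝ) + 1) = ((n - l : ℕ) : ℝ) + 1 := by
        rw [Nat.cast_sub hl]
      rw [e1, e2, e3, e4]
      field_simp
  · by_cases hil1 : i = l + 1
    · subst hil1
      rw [if_neg hil, if_pos rfl]
      have hz2 : (↑(l + 1) : ℝ) * ↑l *
          (if l + 1 - 1 = l - 1 then ((l + 1 - 1).factorial : ℝ)
            * Real.Gamma (β + ((l + 1 - 1 : ℕ) : ℝ) + 1) else 0) = 0 := by
        by_cases hl0 : l = 0
        · subst hl0; simp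
        · rw [if_neg (by omega)]; ring
      rw [hz2, mul_zero, add_zero, zero_add]
      by_cases hln : n ≤ l
      · have hln' : l = n := by omega
        subst hln'
        rw [Nat.sub_self]
        simp
      · rw [show n + 1 - (l + 1) = n - l by omega, if_pos rfl,
          LagAux.integral_QPol_succ_mul_QPol β hβ l, hkn,
          show n - 1 - l = n - l - 1 by omega]
        have e1 : Real.Gamma (α + ((n - l - 1 : ℕ) : ℝ) + 1)
            = Real.Gamma (α + 1) * (ascPochhammer ℝ (n - l - 1)).eval (α + 1) := by
          rw [show α + ((n - l - 1 : ℕ) : ℝ) + 1 = (α + 1) + ((n - l - 1 : ℕ) : ℝ) by ring]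
          exact LagAux.Gamma_add_nat _ (by linarith) _
        have e2 : Real.Gamma (β + (l : ℝ) + 1)
            = Real.Gamma (β + 1) * (ascPochhammer ℝ l).eval (β + 1) := by
          rw [show β + (l : ℝ) + 1 = (β + 1) + (l : ℝ) by ring]
          exact LagAux.Gamma_add_nat _ (by linarith) _
        have e3 : ((l + 1).factorial : ℝ) = ((l : ℝ) + 1) * (l.factorial : ℝ) := by
          rw [Nat.factorial_succ]; push_cast; ring
        have e4 : ((n - l : ℕ) : ℝ) = (n : ℝ) - (l : ℝ) := Nat.cast_sub hl
        rw [e1, e2, e3, e4]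
        field_simp
    · rw [if_neg hil, if_neg hil1, add_zero]
      have hz1 : (↑(n + 1 - i) : ℝ) * ↑(n - l) *
          (if n + 1 - i - 1 = n - l - 1 then ((n + 1 - i - 1).factorial : ℝ)
            * Real.Gamma (α + ((n + 1 - i - 1 : ℕ) : ℝ) + 1) else 0) = 0 := by
        by_cases h1 : i = n + 1
        · rw [show n + 1 - i = 0 by omega]; simp
        · by_cases h2 : n ≤ l
          · rw [show n - l = 0 by omega]; simp
          · rw [if_neg (by omega)]; ring
      have hz2 : (↑i : ℝ) * ↑l *
          (if i - 1 = l - 1 then ((i - 1).factorial : ℝ)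
            * Real.Gamma (β + ((i - 1 : ℕ) : ℝ) + 1) else 0) = 0 := by
        by_cases h1 : i = 0
        · subst h1; simp
        · by_cases h2 : l = 0
          · subst h2; simp
          · rw [if_neg (by omega)]; ring
      rw [hz1, hz2, zero_mul, mul_zero, zero_add, mul_zero]
end
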